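/- arXiv:1701.06064 — 2 statements merged into one kernel-verified Lean document; each statement's English description precedes it below -/
import Mathlib

section
/- Let n, p, k be integers with 1 ≤ p ≤ n and 0 ≤ k ≤ p, and let C, c̲, c̄ ∈ ℝ^n_{≥0} with c̲_i ≤ c̄_i for all i, and Γ ≥ 0. Consider the optimization problem: minimize Σ_i C_i·x_i + π·Σ_i c̲_i·z_i + (1−π)·Σ_i c̄_i·z̄_i + Γ·π over x ∈ {0,1}^n with Σ_i x_i = p, z, z̄ ∈ [0,1]^n and π ∈ [0,1], subject to Σ_i (π·z_i + (1−π)·z̄_i) = p and Σ_i x_i·(π·z_i + (1−π)·z̄_i) ≥ p−k. Then there exists an optimal solution (x, z, z̄, π) such that (1) at most one of the 2n variables z_1,…,z_n, z̄_1,…,z̄_n lies strictly between 0 and 1, and (2) π = q/r for some integers q ∈ {0,…,n} and r ∈ {1,…,n+1}. -/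
open Finset

noncomputable section

/-- Feasibility for the rescaled RREC formulation (problem (13)). -/
def Feas8 (n p k : ℕ) (x z zb : Fin n → ℝ) (π : ℝ) : Prop :=
  (∀ i, x i = 0 ∨ x i = 1) ∧ (∑ i, x i) = (p : ℝ) ∧
  (∀ i, z i ∈ Set.Icc (0 : ℝ) 1) ∧ (∀ i, zb i ∈ Set.Icc (0 : ℝ) 1) ∧
  π ∈ Set.Icc (0 : ℝ) 1 ∧
  (∑ i, (π * z i + (1 - π) * zb i)) = (p : ℝ) ∧
  (p : ℝ) - (k : ℝ) ≤ ∑ i, x i * (π * z i + (1 - π) * zb i)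

/-- Objective of the rescaled RREC formulation (problem (13)). -/
def Obj8 (n : ℕ) (C cl cu : Fin n → ℝ) (Γ : ℝ) (x z zb : Fin n → ℝ) (π : ℝ) : ℝ :=
  (∑ i, C i * x i) + π * (∑ i, cl i * z i) + (1 - π) * (∑ i, cu i * zb i) + Γ * π

private lemma decomp_w (n : ℕ) (f w : Fin n → ℝ) (c : ℝ)
    (hw : ∀ i, w i = 0 ∨ w i = 1) :
    ∑ i, w i * f i
      = c * ((univ.filter fun i : Fin n => f i = c ∧ w i = 1).card : ℝ)
        + ∑ i ∈ univ.filter (fun i : Fin n => (f i ≠ 0 ∧ f i ≠ c) ∧ w i = 1), f i := by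
  have key : ∀ i : Fin n, w i * f i
      = (if f i = c ∧ w i = 1 then c else 0)
        + (if (f i ≠ 0 ∧ f i ≠ c) ∧ w i = 1 then f i else 0) := by
    intro i
    rcases hw i with h | h <;> by_cases h1 : f i = c <;> by_cases h2 : f i = 0 <;>
      simp [h, h1, h2]
  rw [Finset.sum_congr rfl (fun i _ => key i), Finset.sum_add_distrib]
  congr 1
  · rw [← Finset.sum_filter, Finset.sum_const, nsmul_eq_mul, mul_comm]
  · rw [← Finset.sum_filter]

private lemma decomp_plain (n : ℕ) (f : Fin n → ℝ) (c : ℝ) :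
    ∑ i, f i
      = c * ((univ.filter fun i : Fin n => f i = c).card : ℝ)
        + ∑ i ∈ univ.filter (fun i : Fin n => f i ≠ 0 ∧ f i ≠ c), f i := by
  have key : ∀ i : Fin n, f i
      = (if f i = c then c else 0)
        + (if f i ≠ 0 ∧ f i ≠ c then f i else 0) := by
    intro i
    by_cases h1 : f i = c <;> by_cases h2 : f i = 0 <;> simp [h1, h2]
  rw [Finset.sum_congr rfl (fun i _ => key i), Finset.sum_add_distrib]
  congr 1
  · rw [← Finset.sum_filter, Finset.sum_const, nsmul_eq_mul, mul_comm]
  · rw [← Finset.sum_filter]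

private lemma indsum_w (n : ℕ) (w : Fin n → ℝ) (P : Fin n → Prop) [DecidablePred P]
    (hw : ∀ i, w i = 0 ∨ w i = 1) :
    ∑ i, w i * (if P i then (1:ℝ) else 0)
      = ((univ.filter fun i : Fin n => P i ∧ w i = 1).card : ℝ) := by
  have key : ∀ i : Fin n, w i * (if P i then (1:ℝ) else 0)
      = if P i ∧ w i = 1 then (1:ℝ) else 0 := by
    intro i
    rcases hw i with h | h <;> by_cases h1 : P i <;> simp [h, h1]
  rw [Finset.sum_congr rfl (fun i _ => key i), ← Finset.sum_filter,
    Finset.sum_const, nsmul_eq_mul, mul_one]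

private lemma indsum_plain (n : ℕ) (P : Fin n → Prop) [DecidablePred P] :
    ∑ i, (if P i then (1:ℝ) else 0)
      = ((univ.filter fun i : Fin n => P i).card : ℝ) := by
  rw [← Finset.sum_filter, Finset.sum_const, nsmul_eq_mul, mul_one]

private lemma card_split (n : ℕ) (P : Fin n → Prop) [DecidablePred P] (x : Fin n → ℝ)
    (hx : ∀ i, x i = 0 ∨ x i = 1) :
    (univ.filter P).card
      = (univ.filter fun i : Fin n => P i ∧ x i = 1).card
        + (univ.filter fun i : Fin n => P i ∧ (1:ℝ) - x i = 1).card := by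
  have h1 : (univ.filter fun i : Fin n => P i ∧ x i = 1)
      = (univ.filter P).filter (fun i => x i = 1) := by
    rw [Finset.filter_filter]
  have h2 : (univ.filter fun i : Fin n => P i ∧ (1:ℝ) - x i = 1)
      = (univ.filter P).filter (fun i => ¬ (x i = 1)) := by
    rw [Finset.filter_filter]
    apply Finset.filter_congr
    intro i _
    rcases hx i with h | h <;> constructor <;> intro hh <;>
      simp_all <;> linarith [hh]
  rw [h1, h2, Finset.card_filter_add_card_filter_not]


def memK (n p k : ℕ) (x a b : Fin n → ℝ) (π : ℝ) : Prop :=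
  (∀ i, 0 ≤ a i ∧ a i ≤ π) ∧ (∀ i, 0 ≤ b i ∧ b i ≤ 1 - π) ∧
  0 ≤ π ∧ π ≤ 1 ∧ (∑ i, (a i + b i)) = (p:ℝ) ∧
  (∑ i, (1 - x i) * (a i + b i)) ≤ (k:ℝ)

private lemma perturb (n p k : ℕ) (hn : 1 ≤ n) (x a b : Fin n → ℝ) (π : ℝ)
    (hx : ∀ i, x i = 0 ∨ x i = 1)
    (hmem : memK n p k x a b π)
    (hext : ∀ (u v : Fin n → ℝ) (δ : ℝ),
        memK n p k x (fun i => a i + u i) (fun i => b i + v i) (π + δ) →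
        memK n p k x (fun i => a i - u i) (fun i => b i - v i) (π - δ) →
        (∀ i, u i = 0) ∧ (∀ i, v i = 0) ∧ δ = 0)
    (u v : Fin n → ℝ) (δ : ℝ)
    (pa0 : ∀ i, a i = 0 → u i = 0) (paπ : ∀ i, a i = π → u i = δ)
    (pb0 : ∀ i, b i = 0 → v i = 0) (pbπ : ∀ i, b i = 1 - π → v i = -δ)
    (pδ : δ = 0 ∨ (0 < π ∧ π < 1))
    (pS1 : ∑ i, (u i + v i) = 0)
    (pS2 : (∑ i, (1 - x i) * (a i + b i)) = (k:ℝ) →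
      ∑ i, (1 - x i) * (u i + v i) = 0) :
    (∀ i, u i = 0) ∧ (∀ i, v i = 0) ∧ δ = 0 := by
  obtain ⟨ha, hb, hπ0, hπ1, hE1, hE2⟩ := hmem
  set M : ℝ := 1 + |δ| + ∑ i, (|u i| + |v i|) with hMdef
  have hsum_nonneg : (0:ℝ) ≤ ∑ i, (|u i| + |v i|) :=
    Finset.sum_nonneg fun i _ => by positivity
  have hM1 : (1:ℝ) ≤ M := by
    have := abs_nonneg δ; simp only [hMdef]; linarith
  have hM0 : (0:ℝ) < M := by linarith
  have hterm : ∀ i : Fin n, |u i| + |v i| ≤ ∑ j, (|u j| + |v j|) := by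
    intro i
    exact Finset.single_le_sum (f := fun j => |u j| + |v j|)
      (fun j _ => by positivity) (mem_univ i)
  have hMu : ∀ i, |u i| + |δ| ≤ M := by
    intro i
    have h1 := hterm i
    have := abs_nonneg (v i)
    simp only [hMdef]; linarith
  have hMv : ∀ i, |v i| + |δ| ≤ M := by
    intro i
    have h1 := hterm i
    have := abs_nonneg (u i)
    simp only [hMdef]; linarith
  have hMT : |∑ i, (1 - x i) * (u i + v i)| ≤ M := by
    calc |∑ i, (1 - x i) * (u i + v i)| ≤ ∑ i, |(1 - x i) * (u i + v i)| :=
          Finset.abs_sum_le_sum_abs _ _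
      _ ≤ ∑ i, (|u i| + |v i|) := by
          apply Finset.sum_le_sum
          intro i _
          rw [abs_mul]
          have h1 : |1 - x i| ≤ 1 := by rcases hx i with h | h <;> simp [h]
          have h2 : |u i + v i| ≤ |u i| + |v i| := abs_add_le _ _
          have h3 : (0:ℝ) ≤ |u i + v i| := abs_nonneg _
          nlinarith
      _ ≤ M := by simp only [hMdef]; linarith [abs_nonneg δ]
  set rooms : Fin n → ℝ := fun i =>
    min (min (if a i = 0 then 1 else a i) (if a i = π then 1 else π - a i))
        (min (if b i = 0 then 1 else b i) (if b i = 1 - π then 1 else 1 - π - b i))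
    with hroomsdef
  have hrooms_pos : ∀ i, 0 < rooms i := by
    intro i
    simp only [hroomsdef]
    apply lt_min <;> apply lt_min <;> split_ifs with h
    · norm_num
    · exact lt_of_le_of_ne (ha i).1 (Ne.symm h)
    · norm_num
    · exact lt_of_le_of_ne (sub_nonneg.2 (ha i).2) (by intro hc; exact h (by linarith))
    · norm_num
    · exact lt_of_le_of_ne (hb i).1 (Ne.symm h)
    · norm_num
    · exact lt_of_le_of_ne (sub_nonneg.2 (hb i).2) (by intro hc; exact h (by linarith))
  set roomπ : ℝ := if δ = 0 then 1 else min π (1 - π) with hroomπdef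
  have hroomπ_pos : 0 < roomπ := by
    simp only [hroomπdef]
    split_ifs with h
    · norm_num
    · rcases pδ with h' | ⟨h1, h2⟩
      · exact absurd h' h
      · exact lt_min h1 (by linarith)
  set room2 : ℝ := if (∑ i, (1 - x i) * (a i + b i)) = (k:ℝ) then 1
      else (k:ℝ) - ∑ i, (1 - x i) * (a i + b i) with hroom2def
  have hroom2_pos : 0 < room2 := by
    simp only [hroom2def]
    split_ifs with h
    · norm_num
    · exact sub_pos.2 (lt_of_le_of_ne hE2 h)
  have hne : (univ : Finset (Fin n)).Nonempty := ⟨⟨0, by omega⟩, mem_univ _⟩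
  set R : ℝ := min (min roomπ room2) (univ.inf' hne rooms) with hRdef
  have hR : 0 < R := by
    simp only [hRdef]
    apply lt_min (lt_min hroomπ_pos hroom2_pos)
    rw [Finset.lt_inf'_iff]
    intro i _
    exact hrooms_pos i
  set ε : ℝ := R / M with hεdef
  have hε : 0 < ε := div_pos hR hM0
  have hRr : ∀ i, R ≤ rooms i := fun i =>
    le_trans (min_le_right _ _) (Finset.inf'_le _ (mem_univ i))
  have hRπ : R ≤ roomπ := le_trans (min_le_left _ _) (min_le_left _ _)
  have hR2 : R ≤ room2 := le_trans (min_le_left _ _) (min_le_right _ _)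
  have hbound : ∀ c r : ℝ, |c| ≤ M → R ≤ r → ε * |c| ≤ r := by
    intro c r hc hr
    have h1 : ε * |c| ≤ ε * M := by
      apply mul_le_mul_of_nonneg_left hc hε.le
    have h2 : ε * M = R := by
      rw [hεdef]; exact div_mul_cancel₀ R hM0.ne'
    linarith
  -- the main membership claim
  have main : ∀ s : ℝ, s = 1 ∨ s = -1 →
      memK n p k x (fun i => a i + (ε * s) * u i) (fun i => b i + (ε * s) * v i)
        (π + (ε * s) * δ) := by
    intro s hs
    have habs : ∀ c : ℝ, |(ε * s) * c| = ε * |c| := by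
      intro c
      rcases hs with h | h <;>
        simp [h, abs_mul, abs_of_pos hε]
    refine ⟨?_, ?_, ?_, ?_, ?_, ?_⟩
    · -- a bounds
      intro i
      refine ⟨show (0:ℝ) ≤ a i + (ε * s) * u i from ?_,
        show a i + (ε * s) * u i ≤ π + (ε * s) * δ from ?_⟩
      · by_cases h0 : a i = 0
        · simp [h0, pa0 i h0]
        · have h1 : ε * |u i| ≤ a i := by
            have := hbound (u i) (a i) (by linarith [hMu i, abs_nonneg δ]) ?_
            · exact this
            · refine le_trans (hRr i) ?_
              simp only [hroomsdef]
              refine le_trans (min_le_left _ _) (le_trans (min_le_left _ _) ?_)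
              rw [if_neg h0]
          have h2 := habs (u i)
          have h3 := neg_abs_le ((ε * s) * u i)
          linarith
      · by_cases h0 : a i = π
        · rw [paπ i h0]; linarith [le_of_eq h0]
        · have h1 : ε * |u i - δ| ≤ π - a i := by
            apply hbound
            · calc |u i - δ| ≤ |u i| + |δ| := abs_sub _ _
                _ ≤ M := hMu i
            · refine le_trans (hRr i) ?_
              simp only [hroomsdef]
              refine le_trans (min_le_left _ _) (le_trans (min_le_right _ _) ?_)
              rw [if_neg h0]
          have h2 := habs (u i - δ)
          have h3 := le_abs_self ((ε * s) * (u i - δ))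
          have h4 : (ε * s) * (u i - δ) = (ε * s) * u i - (ε * s) * δ := by ring
          linarith
    · -- b bounds
      intro i
      refine ⟨show (0:ℝ) ≤ b i + (ε * s) * v i from ?_,
        show b i + (ε * s) * v i ≤ 1 - (π + (ε * s) * δ) from ?_⟩
      · by_cases h0 : b i = 0
        · simp [h0, pb0 i h0]
        · have h1 : ε * |v i| ≤ b i := by
            apply hbound
            · linarith [hMv i, abs_nonneg δ]
            · refine le_trans (hRr i) ?_
              simp only [hroomsdef]
              refine le_trans (min_le_right _ _) (le_trans (min_le_left _ _) ?_)
              rw [if_neg h0]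
          have h2 := habs (v i)
          have h3 := neg_abs_le ((ε * s) * v i)
          linarith
      · by_cases h0 : b i = 1 - π
        · rw [pbπ i h0]; linarith [le_of_eq h0]
        · have h1 : ε * |v i + δ| ≤ 1 - π - b i := by
            apply hbound
            · calc |v i + δ| ≤ |v i| + |δ| := abs_add_le _ _
                _ ≤ M := hMv i
            · refine le_trans (hRr i) ?_
              simp only [hroomsdef]
              refine le_trans (min_le_right _ _) (le_trans (min_le_right _ _) ?_)
              rw [if_neg h0]
          have h2 := habs (v i + δ)
          have h3 := le_abs_self ((ε * s) * (v i + δ))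
          have h4 : (ε * s) * (v i + δ) = (ε * s) * v i + (ε * s) * δ := by ring
          linarith
    · -- 0 ≤ π'
      by_cases h0 : δ = 0
      · simp [h0]; linarith
      · have hππ : 0 < π ∧ π < 1 := by tauto
        have h1 : ε * |δ| ≤ min π (1 - π) := by
          apply hbound
          · linarith [hMu ⟨0, by omega⟩, abs_nonneg (u ⟨0, by omega⟩)]
          · refine le_trans hRπ ?_
            simp only [hroomπdef]
            rw [if_neg h0]
        have h2 := habs δ
        have h3 := neg_abs_le ((ε * s) * δ)
        have h4 : min π (1 - π) ≤ π := min_le_left _ _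
        linarith
    · -- π' ≤ 1
      by_cases h0 : δ = 0
      · simp [h0]; linarith
      · have h1 : ε * |δ| ≤ min π (1 - π) := by
          apply hbound
          · linarith [hMu ⟨0, by omega⟩, abs_nonneg (u ⟨0, by omega⟩)]
          · refine le_trans hRπ ?_
            simp only [hroomπdef]
            rw [if_neg h0]
        have h2 := habs δ
        have h3 := le_abs_self ((ε * s) * δ)
        have h4 : min π (1 - π) ≤ 1 - π := min_le_right _ _
        linarith
    · -- sum = p
      have h1 : ∀ i : Fin n, (a i + (ε * s) * u i) + (b i + (ε * s) * v i)
          = (a i + b i) + (ε * s) * (u i + v i) := fun i => by ring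
      rw [Finset.sum_congr rfl fun i _ => h1 i, Finset.sum_add_distrib,
        ← Finset.mul_sum, pS1, mul_zero, add_zero, hE1]
    · -- weighted sum ≤ k
      have h1 : ∀ i : Fin n, (1 - x i) * ((a i + (ε * s) * u i) + (b i + (ε * s) * v i))
          = (1 - x i) * (a i + b i) + (ε * s) * ((1 - x i) * (u i + v i)) := fun i => by
        ring
      rw [Finset.sum_congr rfl fun i _ => h1 i, Finset.sum_add_distrib, ← Finset.mul_sum]
      by_cases h0 : (∑ i, (1 - x i) * (a i + b i)) = (k:ℝ)
      · rw [pS2 h0, mul_zero, add_zero, h0]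
      · have h2 : ε * |∑ i, (1 - x i) * (u i + v i)|
            ≤ (k:ℝ) - ∑ i, (1 - x i) * (a i + b i) := by
          apply hbound _ _ hMT
          refine le_trans hR2 ?_
          simp only [hroom2def]
          rw [if_neg h0]
        have h3 := habs (∑ i, (1 - x i) * (u i + v i))
        have h4 := le_abs_self ((ε * s) * ∑ i, (1 - x i) * (u i + v i))
        linarith
  have hplus := main 1 (Or.inl rfl)
  have hminus := main (-1) (Or.inr rfl)
  have hplus' : memK n p k x (fun i => a i + ε * u i) (fun i => b i + ε * v i)
      (π + ε * δ) := by
    have e1 : (fun i => a i + ε * u i) = (fun i => a i + ε * 1 * u i) := by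
      funext i; ring
    have e2 : (fun i => b i + ε * v i) = (fun i => b i + ε * 1 * v i) := by
      funext i; ring
    have e3 : π + ε * δ = π + ε * 1 * δ := by ring
    rw [e1, e2, e3]; exact hplus
  have hminus' : memK n p k x (fun i => a i - ε * u i) (fun i => b i - ε * v i)
      (π - ε * δ) := by
    have e1 : (fun i => a i - ε * u i) = (fun i => a i + ε * -1 * u i) := by
      funext i; ring
    have e2 : (fun i => b i - ε * v i) = (fun i => b i + ε * -1 * v i) := by
      funext i; ring
    have e3 : π - ε * δ = π + ε * -1 * δ := by ring
    rw [e1, e2, e3]; exact hminus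
  obtain ⟨hu, hv, hδ⟩ := hext (fun i => ε * u i) (fun i => ε * v i) (ε * δ) hplus' hminus'
  refine ⟨fun i => (mul_eq_zero.mp (hu i)).resolve_left (ne_of_gt hε),
    fun i => (mul_eq_zero.mp (hv i)).resolve_left (ne_of_gt hε),
    (mul_eq_zero.mp hδ).resolve_left (ne_of_gt hε)⟩

private lemma mainMove (n p k : ℕ) (hn : 1 ≤ n) (x a b : Fin n → ℝ) (π : ℝ)
    (hx : ∀ i, x i = 0 ∨ x i = 1)
    (hmem : memK n p k x a b π)
    (hext : ∀ (u v : Fin n → ℝ) (δ : ℝ),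
        memK n p k x (fun i => a i + u i) (fun i => b i + v i) (π + δ) →
        memK n p k x (fun i => a i - u i) (fun i => b i - v i) (π - δ) →
        (∀ i, u i = 0) ∧ (∀ i, v i = 0) ∧ δ = 0)
    (δ c₁ c₂ : ℝ) (ty₁ ty₂ : Bool) (i₁ i₂ : Fin n)
    (h₁ : (if ty₁ = true then a i₁ ≠ 0 ∧ a i₁ ≠ π else b i₁ ≠ 0 ∧ b i₁ ≠ 1 - π) ∨ c₁ = 0)
    (h₂ : (if ty₂ = true then a i₂ ≠ 0 ∧ a i₂ ≠ π else b i₂ ≠ 0 ∧ b i₂ ≠ 1 - π) ∨ c₂ = 0)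
    (hδ : δ = 0 ∨ (0 < π ∧ π < 1))
    (hE1 : δ * (((univ.filter fun i : Fin n => a i = π).card : ℝ)
        - ((univ.filter fun i : Fin n => b i = 1 - π).card : ℝ)) + c₁ + c₂ = 0)
    (hE2 : (∑ i, (1 - x i) * (a i + b i)) = (k:ℝ) →
        δ * (((univ.filter fun i : Fin n => a i = π ∧ (1:ℝ) - x i = 1).card : ℝ)
          - ((univ.filter fun i : Fin n => b i = 1 - π ∧ (1:ℝ) - x i = 1).card : ℝ))
        + c₁ * (1 - x i₁) + c₂ * (1 - x i₂) = 0) :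
    (∀ m, δ * (if a m = π then (1:ℝ) else 0)
        + c₁ * (if ty₁ = true ∧ m = i₁ then (1:ℝ) else 0)
        + c₂ * (if ty₂ = true ∧ m = i₂ then (1:ℝ) else 0) = 0) ∧
    (∀ m, -δ * (if b m = 1 - π then (1:ℝ) else 0)
        + c₁ * (if ty₁ = false ∧ m = i₁ then (1:ℝ) else 0)
        + c₂ * (if ty₂ = false ∧ m = i₂ then (1:ℝ) else 0) = 0) ∧ δ = 0 := by
  set u : Fin n → ℝ := fun m => δ * (if a m = π then (1:ℝ) else 0)
      + c₁ * (if ty₁ = true ∧ m = i₁ then (1:ℝ) else 0)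
      + c₂ * (if ty₂ = true ∧ m = i₂ then (1:ℝ) else 0) with hudef
  set v : Fin n → ℝ := fun m => -δ * (if b m = 1 - π then (1:ℝ) else 0)
      + c₁ * (if ty₁ = false ∧ m = i₁ then (1:ℝ) else 0)
      + c₂ * (if ty₂ = false ∧ m = i₂ then (1:ℝ) else 0) with hvdef
  have T : ∀ (ty : Bool) (i₀ : Fin n),
      ∑ m, (if ty = true ∧ m = i₀ then (1:ℝ) else 0) = if ty = true then 1 else 0 := by
    intro ty i₀
    rcases ty with _ | _
    · simp
    · simp
  have T' : ∀ (ty : Bool) (i₀ : Fin n),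
      ∑ m, (1 - x m) * (if ty = true ∧ m = i₀ then (1:ℝ) else 0)
        = if ty = true then 1 - x i₀ else 0 := by
    intro ty i₀
    rcases ty with _ | _
    · simp
    · have : ∀ m : Fin n, (1 - x m) * (if (true = true) ∧ m = i₀ then (1:ℝ) else 0)
          = if m = i₀ then 1 - x i₀ else 0 := by
        intro m
        by_cases h : m = i₀ <;> simp [h]
      rw [Finset.sum_congr rfl fun m _ => this m, Finset.sum_ite_eq' univ i₀]
      simp
  have S1 : ∑ m, (if a m = π then (1:ℝ) else 0)
      = ((univ.filter fun i : Fin n => a i = π).card : ℝ) := indsum_plain n _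
  have S2 : ∑ m, (if b m = 1 - π then (1:ℝ) else 0)
      = ((univ.filter fun i : Fin n => b i = 1 - π).card : ℝ) := indsum_plain n _
  have hw1 : ∀ i, (1:ℝ) - x i = 0 ∨ (1:ℝ) - x i = 1 := by
    intro i; rcases hx i with h | h <;> simp [h]
  have S3 : ∑ m, ((1:ℝ) - x m) * (if a m = π then (1:ℝ) else 0)
      = ((univ.filter fun i : Fin n => a i = π ∧ (1:ℝ) - x i = 1).card : ℝ) :=
    indsum_w n _ _ hw1
  have S4 : ∑ m, ((1:ℝ) - x m) * (if b m = 1 - π then (1:ℝ) else 0)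
      = ((univ.filter fun i : Fin n => b i = 1 - π ∧ (1:ℝ) - x i = 1).card : ℝ) :=
    indsum_w n _ _ hw1
  have hone : ∀ ty : Bool, (if ty = true then (1:ℝ) else 0) + (if ty = false then (1:ℝ) else 0) = 1 := by
    intro ty; rcases ty with _ | _ <;> simp
  have hone' : ∀ (ty : Bool) (i₀ : Fin n),
      (if ty = true then (1:ℝ) - x i₀ else 0) + (if ty = false then (1:ℝ) - x i₀ else 0)
        = 1 - x i₀ := by
    intro ty i₀; rcases ty with _ | _ <;> simp
  apply perturb n p k hn x a b π hx hmem hext u v δ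
  · -- pa0
    intro m hm
    have h1 : (if a m = π then (1:ℝ) else 0) = 0 ∨ δ = 0 := by
      by_cases hc : a m = π
      · right
        rcases hδ with h | ⟨h01, _⟩
        · exact h
        · exfalso; rw [hm] at hc; linarith [hc]
      · left; rw [if_neg hc]
    have h2 : c₁ * (if ty₁ = true ∧ m = i₁ then (1:ℝ) else 0) = 0 := by
      by_cases hc : ty₁ = true ∧ m = i₁
      · rcases h₁ with hg | hz
        · exfalso
          rw [hc.1] at hg
          simp only [if_pos rfl] at hg
          exact hg.1 (by rw [← hc.2]; exact hm)
        · simp [hz]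
      · simp [if_neg hc]
    have h3 : c₂ * (if ty₂ = true ∧ m = i₂ then (1:ℝ) else 0) = 0 := by
      by_cases hc : ty₂ = true ∧ m = i₂
      · rcases h₂ with hg | hz
        · exfalso
          rw [hc.1] at hg
          simp only [if_pos rfl] at hg
          exact hg.1 (by rw [← hc.2]; exact hm)
        · simp [hz]
      · simp [if_neg hc]
    simp only [hudef]
    rcases h1 with h1 | h1 <;> rw [h1] <;> rw [h2, h3] <;> ring
  · -- paπ
    intro m hm
    have h2 : c₁ * (if ty₁ = true ∧ m = i₁ then (1:ℝ) else 0) = 0 := by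
      by_cases hc : ty₁ = true ∧ m = i₁
      · rcases h₁ with hg | hz
        · exfalso
          rw [hc.1] at hg
          simp only [if_pos rfl] at hg
          exact hg.2 (by rw [← hc.2]; exact hm)
        · simp [hz]
      · simp [if_neg hc]
    have h3 : c₂ * (if ty₂ = true ∧ m = i₂ then (1:ℝ) else 0) = 0 := by
      by_cases hc : ty₂ = true ∧ m = i₂
      · rcases h₂ with hg | hz
        · exfalso
          rw [hc.1] at hg
          simp only [if_pos rfl] at hg
          exact hg.2 (by rw [← hc.2]; exact hm)
        · simp [hz]
      · simp [if_neg hc]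
    simp only [hudef]
    rw [if_pos hm, h2, h3]; ring
  · -- pb0
    intro m hm
    have h1 : (if b m = 1 - π then (1:ℝ) else 0) = 0 ∨ δ = 0 := by
      by_cases hc : b m = 1 - π
      · right
        rcases hδ with h | ⟨_, h11⟩
        · exact h
        · exfalso; rw [hm] at hc; linarith [hc]
      · left; rw [if_neg hc]
    have h2 : c₁ * (if ty₁ = false ∧ m = i₁ then (1:ℝ) else 0) = 0 := by
      by_cases hc : ty₁ = false ∧ m = i₁
      · rcases h₁ with hg | hz
        · exfalso
          rw [hc.1] at hg
          simp only [Bool.false_eq_true, if_false] at hg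
          exact hg.1 (by rw [← hc.2]; exact hm)
        · simp [hz]
      · simp [if_neg hc]
    have h3 : c₂ * (if ty₂ = false ∧ m = i₂ then (1:ℝ) else 0) = 0 := by
      by_cases hc : ty₂ = false ∧ m = i₂
      · rcases h₂ with hg | hz
        · exfalso
          rw [hc.1] at hg
          simp only [Bool.false_eq_true, if_false] at hg
          exact hg.1 (by rw [← hc.2]; exact hm)
        · simp [hz]
      · simp [if_neg hc]
    simp only [hvdef]
    rcases h1 with h1 | h1 <;> rw [h1] <;> rw [h2, h3] <;> ring
  · -- pbπ
    intro m hm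
    have h2 : c₁ * (if ty₁ = false ∧ m = i₁ then (1:ℝ) else 0) = 0 := by
      by_cases hc : ty₁ = false ∧ m = i₁
      · rcases h₁ with hg | hz
        · exfalso
          rw [hc.1] at hg
          simp only [Bool.false_eq_true, if_false] at hg
          exact hg.2 (by rw [← hc.2]; exact hm)
        · simp [hz]
      · simp [if_neg hc]
    have h3 : c₂ * (if ty₂ = false ∧ m = i₂ then (1:ℝ) else 0) = 0 := by
      by_cases hc : ty₂ = false ∧ m = i₂
      · rcases h₂ with hg | hz
        · exfalso
          rw [hc.1] at hg
          simp only [Bool.false_eq_true, if_false] at hg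
          exact hg.2 (by rw [← hc.2]; exact hm)
        · simp [hz]
      · simp [if_neg hc]
    simp only [hvdef]
    rw [if_pos hm, h2, h3]; ring
  · -- pδ
    exact hδ
  · -- pS1
    have hsu : ∑ m, u m = δ * ((univ.filter fun i : Fin n => a i = π).card : ℝ)
        + c₁ * (if ty₁ = true then 1 else 0) + c₂ * (if ty₂ = true then 1 else 0) := by
      simp only [hudef]
      rw [Finset.sum_add_distrib, Finset.sum_add_distrib, ← Finset.mul_sum,
        ← Finset.mul_sum, ← Finset.mul_sum, S1, T ty₁ i₁, T ty₂ i₂]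
    have hsv : ∑ m, v m = -δ * ((univ.filter fun i : Fin n => b i = 1 - π).card : ℝ)
        + c₁ * (if ty₁ = false then 1 else 0) + c₂ * (if ty₂ = false then 1 else 0) := by
      simp only [hvdef]
      have T2 : ∀ (ty : Bool) (i₀ : Fin n),
          ∑ m, (if ty = false ∧ m = i₀ then (1:ℝ) else 0) = if ty = false then 1 else 0 := by
        intro ty i₀; rcases ty with _ | _ <;> simp
      rw [Finset.sum_add_distrib, Finset.sum_add_distrib, ← Finset.mul_sum,
        ← Finset.mul_sum, ← Finset.mul_sum, S2, T2 ty₁ i₁, T2 ty₂ i₂]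
    rw [Finset.sum_add_distrib, hsu, hsv]
    have ec1 : c₁ * (if ty₁ = true then (1:ℝ) else 0)
        + c₁ * (if ty₁ = false then (1:ℝ) else 0) = c₁ := by
      rw [← mul_add, hone ty₁, mul_one]
    have ec2 : c₂ * (if ty₂ = true then (1:ℝ) else 0)
        + c₂ * (if ty₂ = false then (1:ℝ) else 0) = c₂ := by
      rw [← mul_add, hone ty₂, mul_one]
    linarith [hE1, ec1, ec2]
  · -- pS2
    intro htight
    have key := hE2 htight
    have hsu : ∑ m, (1 - x m) * u m
        = δ * ((univ.filter fun i : Fin n => a i = π ∧ (1:ℝ) - x i = 1).card : ℝ)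
        + c₁ * (if ty₁ = true then 1 - x i₁ else 0)
        + c₂ * (if ty₂ = true then 1 - x i₂ else 0) := by
      simp only [hudef]
      have congr1 : ∀ m : Fin n, (1 - x m) * (δ * (if a m = π then (1:ℝ) else 0)
          + c₁ * (if ty₁ = true ∧ m = i₁ then (1:ℝ) else 0)
          + c₂ * (if ty₂ = true ∧ m = i₂ then (1:ℝ) else 0))
          = δ * ((1 - x m) * (if a m = π then (1:ℝ) else 0))
          + c₁ * ((1 - x m) * (if ty₁ = true ∧ m = i₁ then (1:ℝ) else 0))
          + c₂ * ((1 - x m) * (if ty₂ = true ∧ m = i₂ then (1:ℝ) else 0)) := by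
        intro m; ring
      rw [Finset.sum_congr rfl fun m _ => congr1 m, Finset.sum_add_distrib,
        Finset.sum_add_distrib, ← Finset.mul_sum, ← Finset.mul_sum, ← Finset.mul_sum,
        S3, T' ty₁ i₁, T' ty₂ i₂]
    have hsv : ∑ m, (1 - x m) * v m
        = -δ * ((univ.filter fun i : Fin n => b i = 1 - π ∧ (1:ℝ) - x i = 1).card : ℝ)
        + c₁ * (if ty₁ = false then 1 - x i₁ else 0)
        + c₂ * (if ty₂ = false then 1 - x i₂ else 0) := by
      simp only [hvdef]
      have T2 : ∀ (ty : Bool) (i₀ : Fin n),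
          ∑ m, (1 - x m) * (if ty = false ∧ m = i₀ then (1:ℝ) else 0)
            = if ty = false then 1 - x i₀ else 0 := by
        intro ty i₀
        rcases ty with _ | _
        · have : ∀ m : Fin n, (1 - x m) * (if (false = false) ∧ m = i₀ then (1:ℝ) else 0)
              = if m = i₀ then 1 - x i₀ else 0 := by
            intro m
            by_cases h : m = i₀ <;> simp [h]
          rw [Finset.sum_congr rfl fun m _ => this m, Finset.sum_ite_eq' univ i₀]
          simp
        · simp
      have congr1 : ∀ m : Fin n, (1 - x m) * (-δ * (if b m = 1 - π then (1:ℝ) else 0)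
          + c₁ * (if ty₁ = false ∧ m = i₁ then (1:ℝ) else 0)
          + c₂ * (if ty₂ = false ∧ m = i₂ then (1:ℝ) else 0))
          = -δ * ((1 - x m) * (if b m = 1 - π then (1:ℝ) else 0))
          + c₁ * ((1 - x m) * (if ty₁ = false ∧ m = i₁ then (1:ℝ) else 0))
          + c₂ * ((1 - x m) * (if ty₂ = false ∧ m = i₂ then (1:ℝ) else 0)) := by
        intro m; ring
      rw [Finset.sum_congr rfl fun m _ => congr1 m, Finset.sum_add_distrib,
        Finset.sum_add_distrib, ← Finset.mul_sum, ← Finset.mul_sum, ← Finset.mul_sum,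
        S4, T2 ty₁ i₁, T2 ty₂ i₂]
    have congr0 : ∀ m : Fin n, (1 - x m) * (u m + v m)
        = (1 - x m) * u m + (1 - x m) * v m := fun m => by ring
    rw [Finset.sum_congr rfl fun m _ => congr0 m, Finset.sum_add_distrib, hsu, hsv]
    have ec1 : c₁ * (if ty₁ = true then (1:ℝ) - x i₁ else 0)
        + c₁ * (if ty₁ = false then (1:ℝ) - x i₁ else 0) = c₁ * (1 - x i₁) := by
      rw [← mul_add, hone' ty₁ i₁]
    have ec2 : c₂ * (if ty₂ = true then (1:ℝ) - x i₂ else 0)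
        + c₂ * (if ty₂ = false then (1:ℝ) - x i₂ else 0) = c₂ * (1 - x i₂) := by
      rw [← mul_add, hone' ty₂ i₂]
    linarith [key, ec1, ec2]

private lemma no_int_frac (t' k : ℕ) (ω : ℝ) (h0 : 0 < ω) (h1 : ω < 1)
    (he : (t' : ℝ) + ω = k) : False := by
  rcases le_or_gt k t' with h | h
  · have : (k:ℝ) ≤ t' := by exact_mod_cast h
    linarith
  · have : (t':ℝ) + 1 ≤ k := by exact_mod_cast h
    linarith

private lemma ratpi (n s t P : ℕ) (π : ℝ) (h0 : 0 < π) (h1 : π < 1)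
    (hs : s ≤ n) (ht : t ≤ n) (hst : s ≠ t)
    (heq : (s:ℝ) * π + (t:ℝ) * (1 - π) = P) :
    ∃ q r : ℕ, q ≤ n ∧ 1 ≤ r ∧ r ≤ n + 1 ∧ π = (q:ℝ)/(r:ℝ) := by
  rcases lt_or_gt_of_ne hst with hlt | hgt
  · -- s < t : π = (t-P)/(t-s)
    have hts : (s:ℝ) < t := by exact_mod_cast hlt
    have h2 : ((t:ℝ) - s) * π = (t:ℝ) - P := by ring_nf; ring_nf at heq; linarith
    have hPt : (P:ℝ) < t := by nlinarith
    have hPt' : P < t := by exact_mod_cast hPt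
    refine ⟨t - P, t - s, ?_, ?_, ?_, ?_⟩
    · omega
    · omega
    · omega
    · have hc1 : ((t - P : ℕ) : ℝ) = (t:ℝ) - P := by
        push_cast [Nat.cast_sub hPt'.le]; ring
      have hc2 : ((t - s : ℕ) : ℝ) = (t:ℝ) - s := by
        push_cast [Nat.cast_sub hlt.le]; ring
      rw [hc1, hc2, eq_div_iff (by linarith : (t:ℝ) - s ≠ 0)]
      linarith [h2]
  · have hts : (t:ℝ) < s := by exact_mod_cast hgt
    have h2 : ((s:ℝ) - t) * π = (P:ℝ) - t := by ring_nf; ring_nf at heq; linarith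
    have hPt : (t:ℝ) < P := by nlinarith
    have hPt' : t < P := by exact_mod_cast hPt
    have hPs : (P:ℝ) < s := by nlinarith
    have hPs' : P < s := by exact_mod_cast hPs
    refine ⟨P - t, s - t, ?_, ?_, ?_, ?_⟩
    · omega
    · omega
    · omega
    · have hc1 : ((P - t : ℕ) : ℝ) = (P:ℝ) - t := by
        push_cast [Nat.cast_sub hPt'.le]; ring
      have hc2 : ((s - t : ℕ) : ℝ) = (s:ℝ) - t := by
        push_cast [Nat.cast_sub hgt.le]; ring
      rw [hc1, hc2, eq_div_iff (by linarith : (s:ℝ) - t ≠ 0)]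
      linarith [h2]
private lemma extreme_structure (n p k : ℕ) (hn : 1 ≤ n) (hkp : k ≤ p) (hpn : p ≤ n)
    (x a b : Fin n → ℝ) (π : ℝ)
    (hx : ∀ i, x i = 0 ∨ x i = 1)
    (hmem : memK n p k x a b π)
    (hext : ∀ (u v : Fin n → ℝ) (δ : ℝ),
        memK n p k x (fun i => a i + u i) (fun i => b i + v i) (π + δ) →
        memK n p k x (fun i => a i - u i) (fun i => b i - v i) (π - δ) →
        (∀ i, u i = 0) ∧ (∀ i, v i = 0) ∧ δ = 0) :
    ((univ.filter fun i : Fin n => a i ≠ 0 ∧ a i ≠ π).card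
      + (univ.filter fun i : Fin n => b i ≠ 0 ∧ b i ≠ 1 - π).card ≤ 1) ∧
    (∃ q r : ℕ, q ≤ n ∧ 1 ≤ r ∧ r ≤ n + 1 ∧ π = (q:ℝ)/(r:ℝ)) := by
  classical
  obtain ⟨ha, hb, hπ0, hπ1, hE1, hE2⟩ := hmem
  have hmem' : memK n p k x a b π := ⟨ha, hb, hπ0, hπ1, hE1, hE2⟩
  set FA := univ.filter fun i : Fin n => a i ≠ 0 ∧ a i ≠ π with hFAdef
  set FB := univ.filter fun i : Fin n => b i ≠ 0 ∧ b i ≠ 1 - π with hFBdef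
  set FA1 := univ.filter fun i : Fin n => (a i ≠ 0 ∧ a i ≠ π) ∧ x i = 1 with hFA1def
  set FA0 := univ.filter fun i : Fin n => (a i ≠ 0 ∧ a i ≠ π) ∧ (1:ℝ) - x i = 1 with hFA0def
  set FB1 := univ.filter fun i : Fin n => (b i ≠ 0 ∧ b i ≠ 1 - π) ∧ x i = 1 with hFB1def
  set FB0 := univ.filter fun i : Fin n => (b i ≠ 0 ∧ b i ≠ 1 - π) ∧ (1:ℝ) - x i = 1 with hFB0def
  set sa := (univ.filter fun i : Fin n => a i = π).card with hsadef
  set tb := (univ.filter fun i : Fin n => b i = 1 - π).card with htbdef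
  set sA1 := (univ.filter fun i : Fin n => a i = π ∧ x i = 1).card with hsA1def
  set sA0 := (univ.filter fun i : Fin n => a i = π ∧ (1:ℝ) - x i = 1).card with hsA0def
  set tB1 := (univ.filter fun i : Fin n => b i = 1 - π ∧ x i = 1).card with htB1def
  set tB0 := (univ.filter fun i : Fin n => b i = 1 - π ∧ (1:ℝ) - x i = 1).card with htB0def
  have hFAsplit : FA.card = FA1.card + FA0.card := card_split n _ x hx
  have hFBsplit : FB.card = FB1.card + FB0.card := card_split n _ x hx
  have hsasplit : sa = sA1 + sA0 := card_split n _ x hx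
  have htbsplit : tb = tB1 + tB0 := card_split n _ x hx
  have hcardn : ∀ (P : Fin n → Prop) [DecidablePred P], (univ.filter P).card ≤ n := by
    intro P _
    simpa using Finset.card_filter_le univ P
  have hsan : sa ≤ n := hcardn _
  have htbn : tb ≤ n := hcardn _
  have hsA1n : sA1 ≤ n := hcardn _
  have hsA0n : sA0 ≤ n := hcardn _
  have htB1n : tB1 ≤ n := hcardn _
  have htB0n : tB0 ≤ n := hcardn _
  -- pair move: two distinct slots, same side or slack, is impossible
  have move2 : ∀ (ty₁ ty₂ : Bool) (i₁ i₂ : Fin n),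
      (if ty₁ = true then a i₁ ≠ 0 ∧ a i₁ ≠ π else b i₁ ≠ 0 ∧ b i₁ ≠ 1 - π) →
      (if ty₂ = true then a i₂ ≠ 0 ∧ a i₂ ≠ π else b i₂ ≠ 0 ∧ b i₂ ≠ 1 - π) →
      ¬(ty₁ = ty₂ ∧ i₁ = i₂) →
      (x i₁ = x i₂ ∨ ¬((∑ i, (1 - x i) * (a i + b i)) = (k:ℝ))) → False := by
    intro ty₁ ty₂ i₁ i₂ hg1 hg2 hne hside
    obtain ⟨hu, hv, _⟩ := mainMove n p k hn x a b π hx hmem' hext 0 1 (-1) ty₁ ty₂ i₁ i₂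
      (Or.inl hg1) (Or.inl hg2) (Or.inl rfl)
      (by ring)
      (by
        intro ht
        rcases hside with h | h
        · rw [h]; ring
        · exact absurd ht h)
    rcases ty₁ with _ | _
    · -- ty₁ = false : use hv at i₁
      have h := hv i₁
      have hc : ¬((ty₂ = false) ∧ i₁ = i₂) := by
        intro ⟨hc1, hc2⟩
        exact hne ⟨by rw [hc1], hc2⟩
      simp [hc] at h
    · have h := hu i₁
      have hc : ¬((ty₂ = true) ∧ i₁ = i₂) := by
        intro ⟨hc1, hc2⟩
        exact hne ⟨by rw [hc1], hc2⟩
      simp [hc] at h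
  -- no two same-side slots
  have mem_FA1 : ∀ i ∈ FA1, (a i ≠ 0 ∧ a i ≠ π) ∧ x i = 1 := by
    intro i hi; exact (Finset.mem_filter.mp hi).2
  have mem_FA0 : ∀ i ∈ FA0, (a i ≠ 0 ∧ a i ≠ π) ∧ (1:ℝ) - x i = 1 := by
    intro i hi; exact (Finset.mem_filter.mp hi).2
  have mem_FB1 : ∀ i ∈ FB1, (b i ≠ 0 ∧ b i ≠ 1 - π) ∧ x i = 1 := by
    intro i hi; exact (Finset.mem_filter.mp hi).2
  have mem_FB0 : ∀ i ∈ FB0, (b i ≠ 0 ∧ b i ≠ 1 - π) ∧ (1:ℝ) - x i = 1 := by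
    intro i hi; exact (Finset.mem_filter.mp hi).2
  have side0 : ∀ i : Fin n, (1:ℝ) - x i = 1 → x i = 0 := fun i h => by linarith
  have nss1 : FA1.card + FB1.card ≤ 1 := by
    by_contra hcon
    push_neg at hcon
    have h2 : 2 ≤ FA1.card ∨ 2 ≤ FB1.card ∨ (1 ≤ FA1.card ∧ 1 ≤ FB1.card) := by omega
    rcases h2 with h2 | h2 | ⟨h2, h3⟩
    · obtain ⟨i, hi, j, hj, hij⟩ := Finset.one_lt_card.mp h2
      exact move2 true true i j (by simpa using (mem_FA1 i hi).1) (by simpa using (mem_FA1 j hj).1)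
        (fun hc => hij hc.2) (Or.inl (by rw [(mem_FA1 i hi).2, (mem_FA1 j hj).2]))
    · obtain ⟨i, hi, j, hj, hij⟩ := Finset.one_lt_card.mp h2
      exact move2 false false i j (by simpa using (mem_FB1 i hi).1) (by simpa using (mem_FB1 j hj).1)
        (fun hc => hij hc.2) (Or.inl (by rw [(mem_FB1 i hi).2, (mem_FB1 j hj).2]))
    · obtain ⟨i, hi⟩ := Finset.card_pos.mp h2
      obtain ⟨j, hj⟩ := Finset.card_pos.mp h3
      exact move2 true false i j (by simpa using (mem_FA1 i hi).1) (by simpa using (mem_FB1 j hj).1)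
        (fun hc => by simpa using hc.1) (Or.inl (by rw [(mem_FA1 i hi).2, (mem_FB1 j hj).2]))
  have nss0 : FA0.card + FB0.card ≤ 1 := by
    by_contra hcon
    push_neg at hcon
    have h2 : 2 ≤ FA0.card ∨ 2 ≤ FB0.card ∨ (1 ≤ FA0.card ∧ 1 ≤ FB0.card) := by omega
    rcases h2 with h2 | h2 | ⟨h2, h3⟩
    · obtain ⟨i, hi, j, hj, hij⟩ := Finset.one_lt_card.mp h2
      exact move2 true true i j (by simpa using (mem_FA0 i hi).1) (by simpa using (mem_FA0 j hj).1)
        (fun hc => hij hc.2)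
        (Or.inl (by rw [side0 i (mem_FA0 i hi).2, side0 j (mem_FA0 j hj).2]))
    · obtain ⟨i, hi, j, hj, hij⟩ := Finset.one_lt_card.mp h2
      exact move2 false false i j (by simpa using (mem_FB0 i hi).1) (by simpa using (mem_FB0 j hj).1)
        (fun hc => hij hc.2)
        (Or.inl (by rw [side0 i (mem_FB0 i hi).2, side0 j (mem_FB0 j hj).2]))
    · obtain ⟨i, hi⟩ := Finset.card_pos.mp h2
      obtain ⟨j, hj⟩ := Finset.card_pos.mp h3
      exact move2 true false i j (by simpa using (mem_FA0 i hi).1) (by simpa using (mem_FB0 j hj).1)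
        (fun hc => by simpa using hc.1)
        (Or.inl (by rw [side0 i (mem_FA0 i hi).2, side0 j (mem_FB0 j hj).2]))
  have hw1 : ∀ i, (1:ℝ) - x i = 0 ∨ (1:ℝ) - x i = 1 := by
    intro i; rcases hx i with h | h <;> simp [h]
  have slot1 : 1 ≤ FA1.card + FB1.card → ∃ (ty : Bool) (i : Fin n),
      (if ty = true then a i ≠ 0 ∧ a i ≠ π else b i ≠ 0 ∧ b i ≠ 1 - π) ∧ x i = 1 := by
    intro h
    rcases (by omega : 1 ≤ FA1.card ∨ 1 ≤ FB1.card) with h | h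
    · obtain ⟨i, hi⟩ := Finset.card_pos.mp h
      exact ⟨true, i, by simpa using (mem_FA1 i hi).1, (mem_FA1 i hi).2⟩
    · obtain ⟨i, hi⟩ := Finset.card_pos.mp h
      exact ⟨false, i, by simpa using (mem_FB1 i hi).1, (mem_FB1 i hi).2⟩
  have slot0 : 1 ≤ FA0.card + FB0.card → ∃ (ty : Bool) (i : Fin n),
      (if ty = true then a i ≠ 0 ∧ a i ≠ π else b i ≠ 0 ∧ b i ≠ 1 - π) ∧ x i = 0 := by
    intro h
    rcases (by omega : 1 ≤ FA0.card ∨ 1 ≤ FB0.card) with h | h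
    · obtain ⟨i, hi⟩ := Finset.card_pos.mp h
      exact ⟨true, i, by simpa using (mem_FA0 i hi).1, side0 i (mem_FA0 i hi).2⟩
    · obtain ⟨i, hi⟩ := Finset.card_pos.mp h
      exact ⟨false, i, by simpa using (mem_FB0 i hi).1, side0 i (mem_FB0 i hi).2⟩
  have crossslack : ¬((∑ i, (1 - x i) * (a i + b i)) = (k:ℝ)) →
      (FA1.card + FB1.card) + (FA0.card + FB0.card) ≤ 1 := by
    intro hslack
    by_contra hcon
    push_neg at hcon
    obtain ⟨ty₁, i₁, hg1, hs1⟩ := slot1 (by omega)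
    obtain ⟨ty₂, i₂, hg2, hs2⟩ := slot0 (by omega)
    refine move2 ty₁ ty₂ i₁ i₂ hg1 hg2 ?_ (Or.inr hslack)
    rintro ⟨-, he⟩
    rw [he] at hs1
    rw [hs1] at hs2
    norm_num at hs2
  have crosstight : (∑ i, (1 - x i) * (a i + b i)) = (k:ℝ) → 0 < π → π < 1 →
      (FA1.card + FB1.card) + (FA0.card + FB0.card) ≤ 1 := by
    intro htight h0 h1
    by_contra hcon
    push_neg at hcon
    obtain ⟨ty₁, i₁, hg1, hs1⟩ := slot1 (by omega)
    obtain ⟨ty₂, i₂, hg2, hs2⟩ := slot0 (by omega)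
    obtain ⟨-, -, hd0⟩ := mainMove n p k hn x a b π hx hmem' hext 1
      (-(((sa:ℝ) - (tb:ℝ))) - (((tB0:ℝ) - (sA0:ℝ)))) (((tB0:ℝ) - (sA0:ℝ))) ty₁ ty₂ i₁ i₂
      (Or.inl hg1) (Or.inl hg2) (Or.inr ⟨h0, h1⟩)
      (by rw [← hsadef, ← htbdef]; ring)
      (by intro _; rw [← hsA0def, ← htB0def, hs1, hs2]; ring)
    exact one_ne_zero hd0
  -- sum splitting helpers
  have hsplitw : ∑ i, (1 - x i) * (a i + b i)
      = ∑ i, (1 - x i) * a i + ∑ i, (1 - x i) * b i := by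
    rw [← Finset.sum_add_distrib]
    exact Finset.sum_congr rfl (fun i _ => by ring)
  have hsplitx : ∑ i, x i * (a i + b i)
      = (∑ i, (a i + b i)) - ∑ i, (1 - x i) * (a i + b i) := by
    rw [← Finset.sum_sub_distrib]
    exact Finset.sum_congr rfl (fun i _ => by ring)
  have hsplitxa : ∑ i, x i * (a i + b i)
      = ∑ i, x i * a i + ∑ i, x i * b i := by
    rw [← Finset.sum_add_distrib]
    exact Finset.sum_congr rfl (fun i _ => by ring)
  have eqa : ∑ i, a i = π * (sa:ℝ) + ∑ i ∈ FA, a i := by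
    have h := decomp_plain n a π
    rw [← hsadef, ← hFAdef] at h
    linarith [h]
  have eqb : ∑ i, b i = (1 - π) * (tb:ℝ) + ∑ i ∈ FB, b i := by
    have h := decomp_plain n b (1 - π)
    rw [← htbdef, ← hFBdef] at h
    linarith [h]
  have eqa0 : ∑ i, (1 - x i) * a i = π * (sA0:ℝ) + ∑ i ∈ FA0, a i := by
    have h := decomp_w n a (fun i => 1 - x i) π hw1
    rw [← hsA0def, ← hFA0def] at h
    linarith [h]
  have eqb0 : ∑ i, (1 - x i) * b i = (1 - π) * (tB0:ℝ) + ∑ i ∈ FB0, b i := by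
    have h := decomp_w n b (fun i => 1 - x i) (1 - π) hw1
    rw [← htB0def, ← hFB0def] at h
    linarith [h]
  have eqa1 : ∑ i, x i * a i = π * (sA1:ℝ) + ∑ i ∈ FA1, a i := by
    have h := decomp_w n a x π hx
    rw [← hsA1def, ← hFA1def] at h
    linarith [h]
  have eqb1 : ∑ i, x i * b i = (1 - π) * (tB1:ℝ) + ∑ i ∈ FB1, b i := by
    have h := decomp_w n b x (1 - π) hx
    rw [← htB1def, ← hFB1def] at h
    linarith [h]
  -- π = 0 / π = 1 degenerate facts
  have claimA : FA.card + FB.card ≤ 1 := by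
    rw [hFAsplit, hFBsplit]
    by_cases htight : (∑ i, (1 - x i) * (a i + b i)) = (k:ℝ)
    · rcases lt_or_eq_of_le hπ0 with h0 | h0
      · rcases lt_or_eq_of_le hπ1 with h1 | h1
        · have := crosstight htight h0 h1; omega
        · -- π = 1
          have hbz : ∀ i, b i = 0 := fun i => le_antisymm
            (by have h := (hb i).2; rw [h1] at h; simpa using h) (hb i).1
          have hFB1e : FB1.card = 0 := by
            rw [Finset.card_eq_zero, hFB1def]
            refine Finset.filter_eq_empty_iff.mpr (fun i _ => by simp [hbz i])
          have hFB0e : FB0.card = 0 := by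
            rw [Finset.card_eq_zero, hFB0def]
            refine Finset.filter_eq_empty_iff.mpr (fun i _ => by simp [hbz i])
          have hFA0e : FA0.card = 0 := by
            by_contra hcon
            have hle : FA0.card ≤ 1 := by omega
            have h1c : FA0.card = 1 := by omega
            obtain ⟨j, hj⟩ := Finset.card_eq_one.mp h1c
            have hjm : j ∈ FA0 := by rw [hj]; exact Finset.mem_singleton_self j
            have hsum : ∑ i ∈ FA0, a i = a j := by rw [hj, Finset.sum_singleton]
            have hbz' : ∑ i, (1 - x i) * b i = 0 := by
              refine Finset.sum_eq_zero (fun i _ => by rw [hbz i]; ring)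
            have heq2 : π * (sA0:ℝ) + a j = (k:ℝ) := by
              rw [← hsum, ← eqa0]
              linarith [hsplitw, htight, hbz']
            have hj1 := (mem_FA0 j hjm).1
            have hb1 : 0 < a j := lt_of_le_of_ne (ha j).1 (Ne.symm hj1.1)
            have hb2 : a j < 1 := by
              have hle := (ha j).2
              have hne := hj1.2
              rw [h1] at hle hne
              exact lt_of_le_of_ne hle hne
            refine no_int_frac sA0 k (a j) hb1 hb2 ?_
            rw [h1] at heq2
            linarith [heq2]
          have := nss1
          omega
      · -- π = 0
        have haz : ∀ i, a i = 0 := fun i => le_antisymm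
          (by have h := (ha i).2; rw [← h0] at h; exact h) (ha i).1
        have hFA1e : FA1.card = 0 := by
          rw [Finset.card_eq_zero, hFA1def]
          refine Finset.filter_eq_empty_iff.mpr (fun i _ => by simp [haz i])
        have hFA0e : FA0.card = 0 := by
          rw [Finset.card_eq_zero, hFA0def]
          refine Finset.filter_eq_empty_iff.mpr (fun i _ => by simp [haz i])
        have hFB0e : FB0.card = 0 := by
          by_contra hcon
          have h1c : FB0.card = 1 := by omega
          obtain ⟨j, hj⟩ := Finset.card_eq_one.mp h1c
          have hjm : j ∈ FB0 := by rw [hj]; exact Finset.mem_singleton_self j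
          have hsum : ∑ i ∈ FB0, b i = b j := by rw [hj, Finset.sum_singleton]
          have haz' : ∑ i, (1 - x i) * a i = 0 := by
            refine Finset.sum_eq_zero (fun i _ => by rw [haz i]; ring)
          have heq2 : (1 - π) * (tB0:ℝ) + b j = (k:ℝ) := by
            rw [← hsum, ← eqb0]
            linarith [hsplitw, htight, haz']
          have hj1 := (mem_FB0 j hjm).1
          have hb1 : 0 < b j := lt_of_le_of_ne (hb j).1 (Ne.symm hj1.1)
          have hb2 : b j < 1 := by
            have h2 := (hb j).2
            have h3 : b j ≠ 1 - π := hj1.2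
            rw [← h0] at h2 h3
            simp at h2 h3
            exact lt_of_le_of_ne h2 h3
          refine no_int_frac tB0 k (b j) hb1 hb2 ?_
          rw [← h0] at heq2
          linarith [heq2]
        have := nss1
        omega
    · have := crossslack htight; omega
  refine ⟨claimA, ?_⟩
  -- rationality
  by_cases h01 : 0 < π ∧ π < 1
  swap
  · rcases lt_or_eq_of_le hπ0 with hl | hl
    · rcases lt_or_eq_of_le hπ1 with hr | hr
      · exact absurd ⟨hl, hr⟩ h01
      · exact ⟨1, 1, hn, le_refl 1, by omega, by rw [hr]; norm_num⟩
    · exact ⟨0, 1, by omega, le_refl 1, by omega, by rw [← hl]; norm_num⟩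
  obtain ⟨h0, h1⟩ := h01
  have hFAFB : (FA.card = 0 ∧ FB.card = 0) ∨ (FA.card = 1 ∧ FB.card = 0)
      ∨ (FA.card = 0 ∧ FB.card = 1) := by omega
  rcases hFAFB with ⟨hA, hB⟩ | ⟨hA, hB⟩ | ⟨hA, hB⟩
  · -- no free coordinates
    have hFAe : FA = ∅ := Finset.card_eq_zero.mp hA
    have hFBe : FB = ∅ := Finset.card_eq_zero.mp hB
    have heq : π * (sa:ℝ) + (1 - π) * (tb:ℝ) = (p:ℝ) := by
      have h1' : (p:ℝ) = ∑ i, a i + ∑ i, b i := by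
        rw [← Finset.sum_add_distrib]; exact hE1.symm
      rw [hFAe, Finset.sum_empty] at eqa
      rw [hFBe, Finset.sum_empty] at eqb
      linarith [eqa, eqb, h1']
    by_cases hst : sa = tb
    · by_cases htight : (∑ i, (1 - x i) * (a i + b i)) = (k:ℝ)
      · by_cases hst2 : sA0 = tB0
        · obtain ⟨-, -, hd0⟩ := mainMove n p k hn x a b π hx hmem' hext 1
            0 0 true true ⟨0, by omega⟩ ⟨0, by omega⟩ (Or.inr rfl) (Or.inr rfl)
            (Or.inr ⟨h0, h1⟩)
            (by rw [← hsadef, ← htbdef, hst]; ring)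
            (by intro _; rw [← hsA0def, ← htB0def, hst2]; ring)
          exact absurd hd0 one_ne_zero
        · have hFA0e : FA0 = ∅ := by
            refine Finset.eq_empty_of_forall_notMem (fun i hi => ?_)
            have hm := mem_FA0 i hi
            have : i ∈ FA := by rw [hFAdef]; exact Finset.mem_filter.mpr ⟨Finset.mem_univ i, hm.1⟩
            rw [hFAe] at this
            exact absurd this (Finset.notMem_empty i)
          have hFB0e : FB0 = ∅ := by
            refine Finset.eq_empty_of_forall_notMem (fun i hi => ?_)
            have hm := mem_FB0 i hi
            have : i ∈ FB := by rw [hFBdef]; exact Finset.mem_filter.mpr ⟨Finset.mem_univ i, hm.1⟩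
            rw [hFBe] at this
            exact absurd this (Finset.notMem_empty i)
          have heq2 : (sA0:ℝ) * π + (tB0:ℝ) * (1 - π) = (k:ℝ) := by
            rw [hFA0e, Finset.sum_empty] at eqa0
            rw [hFB0e, Finset.sum_empty] at eqb0
            linarith [hsplitw, htight, eqa0, eqb0]
          exact ratpi n sA0 tB0 k π h0 h1 hsA0n htB0n hst2 heq2
      · obtain ⟨-, -, hd0⟩ := mainMove n p k hn x a b π hx hmem' hext 1
          0 0 true true ⟨0, by omega⟩ ⟨0, by omega⟩ (Or.inr rfl) (Or.inr rfl)
          (Or.inr ⟨h0, h1⟩)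
          (by rw [← hsadef, ← htbdef, hst]; ring)
          (fun ht => absurd ht htight)
        exact absurd hd0 one_ne_zero
    · exact ratpi n sa tb p π h0 h1 hsan htbn hst (by linarith [heq])
  · -- one free a-coordinate
    obtain ⟨i₀, hFAe⟩ := Finset.card_eq_one.mp hA
    have hFBe : FB = ∅ := Finset.card_eq_zero.mp hB
    have hi₀ : i₀ ∈ FA := by rw [hFAe]; exact Finset.mem_singleton_self i₀
    have hgood : a i₀ ≠ 0 ∧ a i₀ ≠ π := by
      rw [hFAdef] at hi₀
      exact (Finset.mem_filter.mp hi₀).2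
    by_cases htight : (∑ i, (1 - x i) * (a i + b i)) = (k:ℝ)
    swap
    · obtain ⟨-, -, hd0⟩ := mainMove n p k hn x a b π hx hmem' hext 1
        ((tb:ℝ) - (sa:ℝ)) 0 true true i₀ ⟨0, by omega⟩ (Or.inl (by simpa using hgood)) (Or.inr rfl)
        (Or.inr ⟨h0, h1⟩)
        (by rw [← hsadef, ← htbdef]; ring)
        (fun ht => absurd ht htight)
      exact absurd hd0 one_ne_zero
    rcases hx i₀ with hxi | hxi
    · -- i₀ on side 0
      have hFA1e : FA1 = ∅ := by
        refine Finset.eq_empty_of_forall_notMem (fun i hi => ?_)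
        have hm := mem_FA1 i hi
        have hiFA : i ∈ FA := by rw [hFAdef]; exact Finset.mem_filter.mpr ⟨Finset.mem_univ i, hm.1⟩
        rw [hFAe, Finset.mem_singleton] at hiFA
        rw [hiFA] at hm
        rw [hxi] at hm
        norm_num at hm
      have hFB1e : FB1 = ∅ := by
        refine Finset.eq_empty_of_forall_notMem (fun i hi => ?_)
        have hm := mem_FB1 i hi
        have : i ∈ FB := by rw [hFBdef]; exact Finset.mem_filter.mpr ⟨Finset.mem_univ i, hm.1⟩
        rw [hFBe] at this
        exact absurd this (Finset.notMem_empty i)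
      have heqS : (sA1:ℝ) * π + (tB1:ℝ) * (1 - π) = ((p - k : ℕ):ℝ) := by
        have hc : ((p - k : ℕ):ℝ) = (p:ℝ) - (k:ℝ) := by
          rw [Nat.cast_sub hkp]
        rw [hFA1e, Finset.sum_empty] at eqa1
        rw [hFB1e, Finset.sum_empty] at eqb1
        rw [hc]
        linarith [hsplitx, hsplitxa, htight, hE1, eqa1, eqb1]
      by_cases hst : sA1 = tB1
      · obtain ⟨-, -, hd0⟩ := mainMove n p k hn x a b π hx hmem' hext 1
          ((tB0:ℝ) - (sA0:ℝ)) 0 true true i₀ ⟨0, by omega⟩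
          (Or.inl (by simpa using hgood)) (Or.inr rfl) (Or.inr ⟨h0, h1⟩)
          (by
            rw [← hsadef, ← htbdef, hsasplit, htbsplit, hst]
            push_cast; ring)
          (by intro _; rw [← hsA0def, ← htB0def, hxi]; ring)
        exact absurd hd0 one_ne_zero
      · exact ratpi n sA1 tB1 (p - k) π h0 h1 (hcardn _) (hcardn _) hst heqS
    · -- i₀ on side 1
      have hFA0e : FA0 = ∅ := by
        refine Finset.eq_empty_of_forall_notMem (fun i hi => ?_)
        have hm := mem_FA0 i hi
        have hiFA : i ∈ FA := by rw [hFAdef]; exact Finset.mem_filter.mpr ⟨Finset.mem_univ i, hm.1⟩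
        rw [hFAe, Finset.mem_singleton] at hiFA
        rw [hiFA] at hm
        rw [hxi] at hm
        norm_num at hm
      have hFB0e : FB0 = ∅ := by
        refine Finset.eq_empty_of_forall_notMem (fun i hi => ?_)
        have hm := mem_FB0 i hi
        have : i ∈ FB := by rw [hFBdef]; exact Finset.mem_filter.mpr ⟨Finset.mem_univ i, hm.1⟩
        rw [hFBe] at this
        exact absurd this (Finset.notMem_empty i)
      have heq2 : (sA0:ℝ) * π + (tB0:ℝ) * (1 - π) = (k:ℝ) := by
        rw [hFA0e, Finset.sum_empty] at eqa0
        rw [hFB0e, Finset.sum_empty] at eqb0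
        linarith [hsplitw, htight, eqa0, eqb0]
      by_cases hst : sA0 = tB0
      · obtain ⟨-, -, hd0⟩ := mainMove n p k hn x a b π hx hmem' hext 1
          ((tb:ℝ) - (sa:ℝ)) 0 true true i₀ ⟨0, by omega⟩
          (Or.inl (by simpa using hgood)) (Or.inr rfl) (Or.inr ⟨h0, h1⟩)
          (by rw [← hsadef, ← htbdef]; ring)
          (by intro _; rw [← hsA0def, ← htB0def, hxi, hst]; ring)
        exact absurd hd0 one_ne_zero
      · exact ratpi n sA0 tB0 k π h0 h1 hsA0n htB0n hst heq2
  · -- one free b-coordinate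
    obtain ⟨i₀, hFBe⟩ := Finset.card_eq_one.mp hB
    have hFAe : FA = ∅ := Finset.card_eq_zero.mp hA
    have hi₀ : i₀ ∈ FB := by rw [hFBe]; exact Finset.mem_singleton_self i₀
    have hgood : b i₀ ≠ 0 ∧ b i₀ ≠ 1 - π := by
      rw [hFBdef] at hi₀
      exact (Finset.mem_filter.mp hi₀).2
    by_cases htight : (∑ i, (1 - x i) * (a i + b i)) = (k:ℝ)
    swap
    · obtain ⟨-, -, hd0⟩ := mainMove n p k hn x a b π hx hmem' hext 1
        ((tb:ℝ) - (sa:ℝ)) 0 false true i₀ ⟨0, by omega⟩ (Or.inl (by simpa using hgood)) (Or.inr rfl)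
        (Or.inr ⟨h0, h1⟩)
        (by rw [← hsadef, ← htbdef]; ring)
        (fun ht => absurd ht htight)
      exact absurd hd0 one_ne_zero
    rcases hx i₀ with hxi | hxi
    · -- i₀ on side 0
      have hFB1e : FB1 = ∅ := by
        refine Finset.eq_empty_of_forall_notMem (fun i hi => ?_)
        have hm := mem_FB1 i hi
        have hiFB : i ∈ FB := by rw [hFBdef]; exact Finset.mem_filter.mpr ⟨Finset.mem_univ i, hm.1⟩
        rw [hFBe, Finset.mem_singleton] at hiFB
        rw [hiFB] at hm
        rw [hxi] at hm
        norm_num at hm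
      have hFA1e : FA1 = ∅ := by
        refine Finset.eq_empty_of_forall_notMem (fun i hi => ?_)
        have hm := mem_FA1 i hi
        have : i ∈ FA := by rw [hFAdef]; exact Finset.mem_filter.mpr ⟨Finset.mem_univ i, hm.1⟩
        rw [hFAe] at this
        exact absurd this (Finset.notMem_empty i)
      have heqS : (sA1:ℝ) * π + (tB1:ℝ) * (1 - π) = ((p - k : ℕ):ℝ) := by
        have hc : ((p - k : ℕ):ℝ) = (p:ℝ) - (k:ℝ) := by
          rw [Nat.cast_sub hkp]
        rw [hFA1e, Finset.sum_empty] at eqa1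
        rw [hFB1e, Finset.sum_empty] at eqb1
        rw [hc]
        linarith [hsplitx, hsplitxa, htight, hE1, eqa1, eqb1]
      by_cases hst : sA1 = tB1
      · obtain ⟨-, -, hd0⟩ := mainMove n p k hn x a b π hx hmem' hext 1
          ((tB0:ℝ) - (sA0:ℝ)) 0 false true i₀ ⟨0, by omega⟩
          (Or.inl (by simpa using hgood)) (Or.inr rfl) (Or.inr ⟨h0, h1⟩)
          (by
            rw [← hsadef, ← htbdef, hsasplit, htbsplit, hst]
            push_cast; ring)
          (by intro _; rw [← hsA0def, ← htB0def, hxi]; ring)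
        exact absurd hd0 one_ne_zero
      · exact ratpi n sA1 tB1 (p - k) π h0 h1 (hcardn _) (hcardn _) hst heqS
    · -- i₀ on side 1
      have hFB0e : FB0 = ∅ := by
        refine Finset.eq_empty_of_forall_notMem (fun i hi => ?_)
        have hm := mem_FB0 i hi
        have hiFB : i ∈ FB := by rw [hFBdef]; exact Finset.mem_filter.mpr ⟨Finset.mem_univ i, hm.1⟩
        rw [hFBe, Finset.mem_singleton] at hiFB
        rw [hiFB] at hm
        rw [hxi] at hm
        norm_num at hm
      have hFA0e : FA0 = ∅ := by
        refine Finset.eq_empty_of_forall_notMem (fun i hi => ?_)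
        have hm := mem_FA0 i hi
        have : i ∈ FA := by rw [hFAdef]; exact Finset.mem_filter.mpr ⟨Finset.mem_univ i, hm.1⟩
        rw [hFAe] at this
        exact absurd this (Finset.notMem_empty i)
      have heq2 : (sA0:ℝ) * π + (tB0:ℝ) * (1 - π) = (k:ℝ) := by
        rw [hFA0e, Finset.sum_empty] at eqa0
        rw [hFB0e, Finset.sum_empty] at eqb0
        linarith [hsplitw, htight, eqa0, eqb0]
      by_cases hst : sA0 = tB0
      · obtain ⟨-, -, hd0⟩ := mainMove n p k hn x a b π hx hmem' hext 1
          ((tb:ℝ) - (sa:ℝ)) 0 false true i₀ ⟨0, by omega⟩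
          (Or.inl (by simpa using hgood)) (Or.inr rfl) (Or.inr ⟨h0, h1⟩)
          (by rw [← hsadef, ← htbdef]; ring)
          (by intro _; rw [← hsA0def, ← htB0def, hxi, hst]; ring)
        exact absurd hd0 one_ne_zero
      · exact ratpi n sA0 tB0 k π h0 h1 hsA0n htB0n hst heq2

set_option maxHeartbeats 1000000 in
private lemma perX (n p k : ℕ) (hp1 : 1 ≤ p) (hpn : p ≤ n) (hk : k ≤ p)
    (C cl cu : Fin n → ℝ) (Γ : ℝ)
    (x : Fin n → ℝ) (hx : ∀ i, x i = 0 ∨ x i = 1) (hxs : (∑ i, x i) = (p:ℝ)) :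
    ∃ z zb : Fin n → ℝ, ∃ πv : ℝ, Feas8 n p k x z zb πv ∧
      (∀ z' zb' : Fin n → ℝ, ∀ π' : ℝ, Feas8 n p k x z' zb' π' →
        Obj8 n C cl cu Γ x z zb πv ≤ Obj8 n C cl cu Γ x z' zb' π') ∧
      ((Finset.univ.filter fun i => 0 < z i ∧ z i < 1).card +
        (Finset.univ.filter fun i => 0 < zb i ∧ zb i < 1).card ≤ 1) ∧
      (∃ q r : ℕ, q ≤ n ∧ 1 ≤ r ∧ r ≤ n + 1 ∧ πv = (q : ℝ) / (r : ℝ)) := by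
  classical
  have hn : 1 ≤ n := le_trans hp1 hpn
  set E := (Fin n → ℝ) × (Fin n → ℝ) × ℝ with hEdef
  set K : Set E := {y : E | memK n p k x y.1 y.2.1 y.2.2} with hKdef
  set h : E → ℝ := fun y => (∑ i, cl i * y.1 i) + (∑ i, cu i * y.2.1 i) + Γ * y.2.2
    with hhdef
  set g : E → ℝ := fun y => (∑ i, (y.1 i)^2) + (∑ i, (y.2.1 i)^2) + (y.2.2)^2
    with hgdef
  have c1 : ∀ i, Continuous fun y : E => y.1 i :=
    fun i => (continuous_apply i).comp continuous_fst
  have c2 : ∀ i, Continuous fun y : E => y.2.1 i :=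
    fun i => (continuous_apply i).comp (continuous_fst.comp continuous_snd)
  have c3 : Continuous fun y : E => y.2.2 := continuous_snd.comp continuous_snd
  have hcont : Continuous h := by
    refine Continuous.add (Continuous.add ?_ ?_) (continuous_const.mul c3)
    · exact continuous_finset_sum _ fun i _ => continuous_const.mul (c1 i)
    · exact continuous_finset_sum _ fun i _ => continuous_const.mul (c2 i)
  have hgcont : Continuous g := by
    refine Continuous.add (Continuous.add ?_ ?_) (c3.pow 2)
    · exact continuous_finset_sum _ fun i _ => (c1 i).pow 2
    · exact continuous_finset_sum _ fun i _ => (c2 i).pow 2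
  have hKclosed : IsClosed K := by
    have h1 : K = (⋂ i, {y : E | 0 ≤ y.1 i ∧ y.1 i ≤ y.2.2}) ∩
        ((⋂ i, {y : E | 0 ≤ y.2.1 i ∧ y.2.1 i ≤ 1 - y.2.2}) ∩
        ({y : E | 0 ≤ y.2.2} ∩ ({y : E | y.2.2 ≤ 1} ∩
        ({y : E | (∑ i, (y.1 i + y.2.1 i)) = (p:ℝ)} ∩
         {y : E | (∑ i, (1 - x i) * (y.1 i + y.2.1 i)) ≤ (k:ℝ)})))) := by
      ext y
      simp only [hKdef, memK, Set.mem_inter_iff, Set.mem_iInter, Set.mem_setOf_eq]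
      all_goals tauto
    rw [h1]
    refine IsClosed.inter (isClosed_iInter fun i =>
        IsClosed.inter (isClosed_le continuous_const (c1 i)) (isClosed_le (c1 i) c3))
      (IsClosed.inter (isClosed_iInter fun i =>
        IsClosed.inter (isClosed_le continuous_const (c2 i))
          (isClosed_le (c2 i) (continuous_const.sub c3)))
      (IsClosed.inter (isClosed_le continuous_const c3)
      (IsClosed.inter (isClosed_le c3 continuous_const)
      (IsClosed.inter (isClosed_eq (continuous_finset_sum _ fun i _ => (c1 i).add (c2 i))
          continuous_const)
        (isClosed_le (continuous_finset_sum _ fun i _ =>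
          continuous_const.mul ((c1 i).add (c2 i))) continuous_const)))))
  have hT : IsCompact ((Set.univ.pi fun _ : Fin n => Set.Icc (0:ℝ) 1) ×ˢ
      ((Set.univ.pi fun _ : Fin n => Set.Icc (0:ℝ) 1) ×ˢ Set.Icc (0:ℝ) 1)) :=
    (isCompact_univ_pi fun _ => isCompact_Icc).prod
      ((isCompact_univ_pi fun _ => isCompact_Icc).prod isCompact_Icc)
  have hsub : K ⊆ (Set.univ.pi fun _ : Fin n => Set.Icc (0:ℝ) 1) ×ˢ
      ((Set.univ.pi fun _ : Fin n => Set.Icc (0:ℝ) 1) ×ˢ Set.Icc (0:ℝ) 1) := by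
    rintro y ⟨ha, hb, h0, h1, -, -⟩
    refine ⟨fun i _ => ⟨(ha i).1, le_trans (ha i).2 h1⟩,
      fun i _ => ⟨(hb i).1, le_trans (hb i).2 (by linarith)⟩, h0, h1⟩
  have hKcomp : IsCompact K := hT.of_isClosed_subset hKclosed hsub
  have hy₀ : ((fun _ => (0:ℝ)), x, (0:ℝ)) ∈ K := by
    show memK n p k x (fun _ => (0:ℝ)) x 0
    refine ⟨fun i => ⟨le_refl 0, le_refl 0⟩,
      fun i => by rcases hx i with hh | hh <;> rw [hh] <;> norm_num,
      le_refl 0, zero_le_one, ?_, ?_⟩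
    · simpa using hxs
    · have : (∑ i, (1 - x i) * ((0:ℝ) + x i)) = 0 := by
        refine Finset.sum_eq_zero fun i _ => ?_
        rcases hx i with hh | hh <;> rw [hh] <;> ring
      rw [this]
      positivity
  obtain ⟨y₁, hy₁K, hy₁min⟩ := hKcomp.exists_isMinOn ⟨_, hy₀⟩ hcont.continuousOn
  have hFcomp : IsCompact (K ∩ {y : E | h y = h y₁}) :=
    hKcomp.inter_right (isClosed_eq hcont continuous_const)
  obtain ⟨w, hwF, hwmax⟩ := hFcomp.exists_isMaxOn ⟨y₁, hy₁K, rfl⟩ hgcont.continuousOn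
  obtain ⟨hwK, hwh0⟩ := hwF
  have hwh : h w = h y₁ := hwh0
  -- extremality
  have hext : ∀ (u v : Fin n → ℝ) (δ : ℝ),
      memK n p k x (fun i => w.1 i + u i) (fun i => w.2.1 i + v i) (w.2.2 + δ) →
      memK n p k x (fun i => w.1 i - u i) (fun i => w.2.1 i - v i) (w.2.2 - δ) →
      (∀ i, u i = 0) ∧ (∀ i, v i = 0) ∧ δ = 0 := by
    intro u v δ hplus hminus
    set yp : E := (fun i => w.1 i + u i, fun i => w.2.1 i + v i, w.2.2 + δ) with hypdef
    set ym : E := (fun i => w.1 i - u i, fun i => w.2.1 i - v i, w.2.2 - δ) with hymdef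
    have hypK : yp ∈ K := hplus
    have hymK : ym ∈ K := hminus
    have h1 : h y₁ ≤ h yp := isMinOn_iff.mp hy₁min yp hypK
    have h2 : h y₁ ≤ h ym := isMinOn_iff.mp hy₁min ym hymK
    have hsum : h yp + h ym = 2 * h w := by
      simp only [hhdef, hypdef, hymdef]
      have s1 : (∑ i, cl i * (w.1 i + u i)) + (∑ i, cl i * (w.1 i - u i))
          = 2 * ∑ i, cl i * w.1 i := by
        rw [← Finset.sum_add_distrib, Finset.mul_sum]
        exact Finset.sum_congr rfl fun i _ => by ring
      have s2 : (∑ i, cu i * (w.2.1 i + v i)) + (∑ i, cu i * (w.2.1 i - v i))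
          = 2 * ∑ i, cu i * w.2.1 i := by
        rw [← Finset.sum_add_distrib, Finset.mul_sum]
        exact Finset.sum_congr rfl fun i _ => by ring
      linarith [s1, s2]
    have hyph : h yp = h y₁ := by linarith [hwh]
    have hymh : h ym = h y₁ := by linarith [hwh]
    have hgp : g yp ≤ g w := isMaxOn_iff.mp hwmax yp ⟨hypK, hyph⟩
    have hgm : g ym ≤ g w := isMaxOn_iff.mp hwmax ym ⟨hymK, hymh⟩
    have hgsum : g yp + g ym = 2 * g w + 2 * ((∑ i, (u i)^2) + (∑ i, (v i)^2) + δ^2) := by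
      simp only [hgdef, hypdef, hymdef]
      have s1 : (∑ i, (w.1 i + u i)^2) + (∑ i, (w.1 i - u i)^2)
          = 2 * (∑ i, (w.1 i)^2) + 2 * (∑ i, (u i)^2) := by
        rw [← Finset.sum_add_distrib, Finset.mul_sum, Finset.mul_sum, ← Finset.sum_add_distrib]
        exact Finset.sum_congr rfl fun i _ => by ring
      have s2 : (∑ i, (w.2.1 i + v i)^2) + (∑ i, (w.2.1 i - v i)^2)
          = 2 * (∑ i, (w.2.1 i)^2) + 2 * (∑ i, (v i)^2) := by
        rw [← Finset.sum_add_distrib, Finset.mul_sum, Finset.mul_sum, ← Finset.sum_add_distrib]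
        exact Finset.sum_congr rfl fun i _ => by ring
      ring_nf
      ring_nf at s1 s2
      linarith [s1, s2]
    have hu2 : (0:ℝ) ≤ ∑ i, (u i)^2 := Finset.sum_nonneg fun i _ => sq_nonneg _
    have hv2 : (0:ℝ) ≤ ∑ i, (v i)^2 := Finset.sum_nonneg fun i _ => sq_nonneg _
    have hδ2 : (0:ℝ) ≤ δ^2 := sq_nonneg _
    have hzero : (∑ i, (u i)^2) = 0 ∧ (∑ i, (v i)^2) = 0 ∧ δ^2 = 0 := by
      constructor
      · linarith
      constructor
      · linarith
      · linarith
    refine ⟨fun i => ?_, fun i => ?_, ?_⟩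
    · have := (Finset.sum_eq_zero_iff_of_nonneg fun i _ => sq_nonneg (u i)).mp
        hzero.1 i (mem_univ i)
      exact pow_eq_zero_iff (by norm_num) |>.mp this
    · have := (Finset.sum_eq_zero_iff_of_nonneg fun i _ => sq_nonneg (v i)).mp
        hzero.2.1 i (mem_univ i)
      exact pow_eq_zero_iff (by norm_num) |>.mp this
    · exact pow_eq_zero_iff (by norm_num) |>.mp hzero.2.2
  obtain ⟨hwa, hwb, hwπ0, hwπ1, hwE1, hwE2⟩ := hwK
  have hwK' : memK n p k x w.1 w.2.1 w.2.2 := ⟨hwa, hwb, hwπ0, hwπ1, hwE1, hwE2⟩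
  obtain ⟨hcount, hqr⟩ := extreme_structure n p k hn hk hpn x w.1 w.2.1 w.2.2 hx hwK' hext
  -- lower bound for arbitrary feasible points with this x
  have hlow : ∀ z' zb' : Fin n → ℝ, ∀ π' : ℝ, Feas8 n p k x z' zb' π' →
      (∑ i, C i * x i) + h w ≤ Obj8 n C cl cu Γ x z' zb' π' := by
    intro z' zb' π' hf
    obtain ⟨-, -, hz', hzb', hπ', hfE1, hfE2⟩ := hf
    set y' : E := (fun i => π' * z' i, fun i => (1 - π') * zb' i, π') with hy'def
    have hy'K : y' ∈ K := by
      refine ⟨fun i => ⟨mul_nonneg hπ'.1 (hz' i).1, ?_⟩,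
        fun i => ⟨mul_nonneg (by linarith [hπ'.2]) (hzb' i).1, ?_⟩,
        hπ'.1, hπ'.2, ?_, ?_⟩
      · calc π' * z' i ≤ π' * 1 := by
              apply mul_le_mul_of_nonneg_left (hz' i).2 hπ'.1
          _ = π' := mul_one _
      · calc (1 - π') * zb' i ≤ (1 - π') * 1 := by
              apply mul_le_mul_of_nonneg_left (hzb' i).2 (by linarith [hπ'.2])
          _ = 1 - π' := mul_one _
      · exact hfE1
      · have hs : (∑ i, (1 - x i) * (π' * z' i + (1 - π') * zb' i))
            = (∑ i, (π' * z' i + (1 - π') * zb' i))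
              - ∑ i, x i * (π' * z' i + (1 - π') * zb' i) := by
          rw [← Finset.sum_sub_distrib]
          exact Finset.sum_congr rfl fun i _ => by ring
        rw [hs, hfE1]
        linarith [hfE2]
    have hobj : Obj8 n C cl cu Γ x z' zb' π' = (∑ i, C i * x i) + h y' := by
      simp only [Obj8, hhdef, hy'def]
      have e1 : π' * (∑ i, cl i * z' i) = ∑ i, cl i * (π' * z' i) := by
        rw [Finset.mul_sum]
        exact Finset.sum_congr rfl fun i _ => by ring
      have e2 : (1 - π') * (∑ i, cu i * zb' i) = ∑ i, cu i * ((1 - π') * zb' i) := by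
        rw [Finset.mul_sum]
        exact Finset.sum_congr rfl fun i _ => by ring
      rw [e1, e2]
      ring
    rw [hobj]
    have h9 : h y₁ ≤ h y' := isMinOn_iff.mp hy₁min y' hy'K
    have hwy : h w ≤ h y' := by
      rw [hwh]
      exact h9
    linarith
  -- construct (z, zb)
  rcases lt_or_eq_of_le hwπ0 with hl | hl
  · rcases lt_or_eq_of_le hwπ1 with hr | hr
    · -- 0 < π < 1
      refine ⟨fun i => w.1 i / w.2.2, fun i => w.2.1 i / (1 - w.2.2), w.2.2, ?_, ?_, ?_, hqr⟩
      · -- Feas8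
        have hπne : w.2.2 ≠ 0 := ne_of_gt hl
        have hπne1 : (1:ℝ) - w.2.2 ≠ 0 := by intro hc; apply absurd hr; simp; linarith
        have hptw : ∀ i, w.2.2 * (w.1 i / w.2.2) + (1 - w.2.2) * (w.2.1 i / (1 - w.2.2))
            = w.1 i + w.2.1 i := by
          intro i
          field_simp
        refine ⟨hx, hxs, ?_, ?_, ⟨hwπ0, hwπ1⟩, ?_, ?_⟩
        · intro i
          constructor
          · exact div_nonneg (hwa i).1 hwπ0
          · rw [div_le_one hl]
            exact (hwa i).2
        · intro i
          constructor
          · exact div_nonneg (hwb i).1 (by linarith)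
          · rw [div_le_one (by linarith : (0:ℝ) < 1 - w.2.2)]
            exact (hwb i).2
        · rw [Finset.sum_congr rfl fun i _ => hptw i]
          exact hwE1
        · rw [Finset.sum_congr rfl fun i _ => by rw [hptw i]]
          have hs : (∑ i, x i * (w.1 i + w.2.1 i))
              = (∑ i, (w.1 i + w.2.1 i)) - ∑ i, (1 - x i) * (w.1 i + w.2.1 i) := by
            rw [← Finset.sum_sub_distrib]
            exact Finset.sum_congr rfl fun i _ => by ring
          rw [hs, hwE1]
          linarith [hwE2]
      · -- optimality
        intro z' zb' π' hf
        have hobj : Obj8 n C cl cu Γ x (fun i => w.1 i / w.2.2)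
            (fun i => w.2.1 i / (1 - w.2.2)) w.2.2 = (∑ i, C i * x i) + h w := by
          simp only [Obj8, hhdef]
          have hπne : w.2.2 ≠ 0 := ne_of_gt hl
          have hπne1 : (1:ℝ) - w.2.2 ≠ 0 := by intro hc; apply absurd hr; simp; linarith
          have e1 : w.2.2 * (∑ i, cl i * (w.1 i / w.2.2)) = ∑ i, cl i * w.1 i := by
            rw [Finset.mul_sum]
            refine Finset.sum_congr rfl fun i _ => ?_
            field_simp
          have e2 : (1 - w.2.2) * (∑ i, cu i * (w.2.1 i / (1 - w.2.2)))
              = ∑ i, cu i * w.2.1 i := by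
            rw [Finset.mul_sum]
            refine Finset.sum_congr rfl fun i _ => ?_
            field_simp
          rw [e1, e2]
          ring
        rw [hobj]
        exact hlow z' zb' π' hf
      · -- counts
        have hc1 : (Finset.univ.filter fun i => 0 < w.1 i / w.2.2 ∧ w.1 i / w.2.2 < 1)
            = Finset.univ.filter fun i : Fin n => w.1 i ≠ 0 ∧ w.1 i ≠ w.2.2 := by
          refine Finset.filter_congr fun i _ => ?_
          constructor
          · rintro ⟨hh1, hh2⟩
            constructor
            · intro hc; rw [hc] at hh1; simp at hh1
            · intro hc
              rw [hc, div_self (ne_of_gt hl)] at hh2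
              exact lt_irrefl 1 hh2
          · rintro ⟨hh1, hh2⟩
            constructor
            · exact div_pos (lt_of_le_of_ne (hwa i).1 (Ne.symm hh1)) hl
            · rw [div_lt_one hl]
              exact lt_of_le_of_ne (hwa i).2 hh2
        have hc2 : (Finset.univ.filter fun i => 0 < w.2.1 i / (1 - w.2.2)
              ∧ w.2.1 i / (1 - w.2.2) < 1)
            = Finset.univ.filter fun i : Fin n => w.2.1 i ≠ 0 ∧ w.2.1 i ≠ 1 - w.2.2 := by
          have hpos : (0:ℝ) < 1 - w.2.2 := by linarith
          refine Finset.filter_congr fun i _ => ?_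
          constructor
          · rintro ⟨hh1, hh2⟩
            constructor
            · intro hc; rw [hc] at hh1; simp at hh1
            · intro hc
              rw [hc, div_self (ne_of_gt hpos)] at hh2
              exact lt_irrefl 1 hh2
          · rintro ⟨hh1, hh2⟩
            constructor
            · exact div_pos (lt_of_le_of_ne (hwb i).1 (Ne.symm hh1)) hpos
            · rw [div_lt_one hpos]
              exact lt_of_le_of_ne (hwb i).2 hh2
        rw [hc1, hc2]
        exact hcount
    · -- π = 1 : b ≡ 0, take z := a, zb := x
      have hbz : ∀ i, w.2.1 i = 0 := by
        intro i
        have h2 := (hwb i).2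
        rw [← hr] at h2
        simp at h2
        exact le_antisymm h2 (hwb i).1
      refine ⟨fun i => w.1 i, x, w.2.2, ?_, ?_, ?_, hqr⟩
      · refine ⟨hx, hxs, ?_, ?_, ⟨hwπ0, hwπ1⟩, ?_, ?_⟩
        · intro i
          exact ⟨(hwa i).1, le_trans (hwa i).2 hwπ1⟩
        · intro i
          rcases hx i with hh | hh <;> rw [hh] <;> norm_num
        · have : ∀ i, w.2.2 * w.1 i + (1 - w.2.2) * x i = w.1 i + w.2.1 i := by
            intro i
            rw [hbz i, hr]
            ring
          rw [Finset.sum_congr rfl fun i _ => this i]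
          exact hwE1
        · have : ∀ i, x i * (w.2.2 * w.1 i + (1 - w.2.2) * x i)
              = x i * (w.1 i + w.2.1 i) := by
            intro i
            rw [hbz i, hr]
            ring
          rw [Finset.sum_congr rfl fun i _ => this i]
          have hs : (∑ i, x i * (w.1 i + w.2.1 i))
              = (∑ i, (w.1 i + w.2.1 i)) - ∑ i, (1 - x i) * (w.1 i + w.2.1 i) := by
            rw [← Finset.sum_sub_distrib]
            exact Finset.sum_congr rfl fun i _ => by ring
          rw [hs, hwE1]
          linarith [hwE2]
      · intro z' zb' π' hf
        have hobj : Obj8 n C cl cu Γ x (fun i => w.1 i) x w.2.2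
            = (∑ i, C i * x i) + h w := by
          simp only [Obj8, hhdef]
          have e1 : w.2.2 * (∑ i, cl i * w.1 i) = ∑ i, cl i * w.1 i := by
            rw [hr]; ring
          have e2 : (∑ i, cu i * w.2.1 i) = 0 :=
            Finset.sum_eq_zero fun i _ => by rw [hbz i]; ring
          rw [e1, e2, hr]
          ring
        rw [hobj]
        exact hlow z' zb' π' hf
      · have hc2 : (Finset.univ.filter fun i => 0 < x i ∧ x i < 1) = ∅ := by
          refine Finset.filter_eq_empty_iff.mpr fun i _ => ?_
          rcases hx i with hh | hh <;> rw [hh] <;> norm_num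
        have hc1 : (Finset.univ.filter fun i => 0 < w.1 i ∧ w.1 i < 1)
            ⊆ Finset.univ.filter fun i : Fin n => w.1 i ≠ 0 ∧ w.1 i ≠ w.2.2 := by
          intro i hi
          obtain ⟨-, hh1, hh2⟩ := Finset.mem_filter.mp hi
          refine Finset.mem_filter.mpr ⟨Finset.mem_univ i, ne_of_gt hh1, ?_⟩
          rw [hr]
          exact ne_of_lt hh2
        have := Finset.card_le_card hc1
        rw [hc2]
        simp only [Finset.card_empty, add_zero]
        omega
  · -- π = 0 : a ≡ 0, take z := x, zb := b
    have haz : ∀ i, w.1 i = 0 := by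
      intro i
      have h2 := (hwa i).2
      rw [← hl] at h2
      exact le_antisymm h2 (hwa i).1
    refine ⟨x, fun i => w.2.1 i, w.2.2, ?_, ?_, ?_, hqr⟩
    · refine ⟨hx, hxs, ?_, ?_, ⟨hwπ0, hwπ1⟩, ?_, ?_⟩
      · intro i
        rcases hx i with hh | hh <;> rw [hh] <;> norm_num
      · intro i
        exact ⟨(hwb i).1, le_trans (hwb i).2 (by linarith)⟩
      · have : ∀ i, w.2.2 * x i + (1 - w.2.2) * w.2.1 i = w.1 i + w.2.1 i := by
          intro i
          rw [haz i, ← hl]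
          ring
        rw [Finset.sum_congr rfl fun i _ => this i]
        exact hwE1
      · have : ∀ i, x i * (w.2.2 * x i + (1 - w.2.2) * w.2.1 i)
            = x i * (w.1 i + w.2.1 i) := by
          intro i
          rw [haz i, ← hl]
          ring
        rw [Finset.sum_congr rfl fun i _ => this i]
        have hs : (∑ i, x i * (w.1 i + w.2.1 i))
            = (∑ i, (w.1 i + w.2.1 i)) - ∑ i, (1 - x i) * (w.1 i + w.2.1 i) := by
          rw [← Finset.sum_sub_distrib]
          exact Finset.sum_congr rfl fun i _ => by ring
        rw [hs, hwE1]
        linarith [hwE2]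
    · intro z' zb' π' hf
      have hobj : Obj8 n C cl cu Γ x x (fun i => w.2.1 i) w.2.2
          = (∑ i, C i * x i) + h w := by
        simp only [Obj8, hhdef]
        have e1 : (∑ i, cl i * w.1 i) = 0 :=
          Finset.sum_eq_zero fun i _ => by rw [haz i]; ring
        rw [e1, ← hl]
        ring
      rw [hobj]
      exact hlow z' zb' π' hf
    · have hc1 : (Finset.univ.filter fun i => 0 < x i ∧ x i < 1) = ∅ := by
        refine Finset.filter_eq_empty_iff.mpr fun i _ => ?_
        rcases hx i with hh | hh <;> rw [hh] <;> norm_num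
      have hc2 : (Finset.univ.filter fun i => 0 < w.2.1 i ∧ w.2.1 i < 1)
          ⊆ Finset.univ.filter fun i : Fin n => w.2.1 i ≠ 0 ∧ w.2.1 i ≠ 1 - w.2.2 := by
        intro i hi
        obtain ⟨-, hh1, hh2⟩ := Finset.mem_filter.mp hi
        refine Finset.mem_filter.mpr ⟨Finset.mem_univ i, ne_of_gt hh1, ?_⟩
        rw [← hl]
        simp only [sub_zero]
        exact ne_of_lt hh2
      have := Finset.card_le_card hc2
      rw [hc1]
      simp only [Finset.card_empty, zero_add]
      omega

/-- Lemma 1: there is an optimal solution of (13) with at most one fractional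
`z`/`z̄` variable and `π` of the form `q/r`, `q ∈ {0,…,n}`, `r ∈ {1,…,n+1}`. -/
theorem stmt8 (n p k : ℕ) (hp1 : 1 ≤ p) (hpn : p ≤ n) (hk : k ≤ p)
    (C cl cu : Fin n → ℝ) (hC : ∀ i, 0 ≤ C i) (hcl : ∀ i, 0 ≤ cl i)
    (hcu : ∀ i, cl i ≤ cu i) (Γ : ℝ) (hΓ : 0 ≤ Γ) :
    ∃ x z zb : Fin n → ℝ, ∃ π : ℝ, Feas8 n p k x z zb π ∧
      (∀ x' z' zb' : Fin n → ℝ, ∀ π' : ℝ, Feas8 n p k x' z' zb' π' →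
        Obj8 n C cl cu Γ x z zb π ≤ Obj8 n C cl cu Γ x' z' zb' π') ∧
      ((Finset.univ.filter fun i => 0 < z i ∧ z i < 1).card +
        (Finset.univ.filter fun i => 0 < zb i ∧ zb i < 1).card ≤ 1) ∧
      (∃ q r : ℕ, q ≤ n ∧ 1 ≤ r ∧ r ≤ n + 1 ∧ π = (q : ℝ) / (r : ℝ)) := by
  classical
  set 𝒮 := Finset.powersetCard p (univ : Finset (Fin n)) with h𝒮def
  set xs : Finset (Fin n) → (Fin n → ℝ) := fun s i => if i ∈ s then (1:ℝ) else 0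
    with hxsdef
  have hxsb : ∀ s : Finset (Fin n), ∀ i, xs s i = 0 ∨ xs s i = 1 := by
    intro s i
    by_cases hm : i ∈ s <;> simp [hxsdef, hm]
  have hxssum : ∀ s ∈ 𝒮, (∑ i, xs s i) = (p:ℝ) := by
    intro s hs
    have hcard : s.card = p := (Finset.mem_powersetCard.mp hs).2
    simp only [hxsdef]
    rw [Finset.sum_ite_mem, Finset.univ_inter, Finset.sum_const, hcard]
    simp
  have hall : ∀ s ∈ 𝒮, ∃ z zb : Fin n → ℝ, ∃ πv : ℝ, Feas8 n p k (xs s) z zb πv ∧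
      (∀ z' zb' : Fin n → ℝ, ∀ π' : ℝ, Feas8 n p k (xs s) z' zb' π' →
        Obj8 n C cl cu Γ (xs s) z zb πv ≤ Obj8 n C cl cu Γ (xs s) z' zb' π') ∧
      ((Finset.univ.filter fun i => 0 < z i ∧ z i < 1).card +
        (Finset.univ.filter fun i => 0 < zb i ∧ zb i < 1).card ≤ 1) ∧
      (∃ q r : ℕ, q ≤ n ∧ 1 ≤ r ∧ r ≤ n + 1 ∧ πv = (q : ℝ) / (r : ℝ)) := by
    intro s hs
    exact perX n p k hp1 hpn hk C cl cu Γ (xs s) (hxsb s) (hxssum s hs)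
  choose! Z ZB PV hF hMin hCnt hQR using hall
  have h𝒮ne : 𝒮.Nonempty := by
    rw [h𝒮def]
    rw [Finset.powersetCard_nonempty]
    simpa using hpn
  obtain ⟨s₀, hs₀, hmin0⟩ := 𝒮.exists_min_image
    (fun s => Obj8 n C cl cu Γ (xs s) (Z s) (ZB s) (PV s)) h𝒮ne
  refine ⟨xs s₀, Z s₀, ZB s₀, PV s₀, hF s₀ hs₀, ?_, hCnt s₀ hs₀, hQR s₀ hs₀⟩
  intro x' z' zb' π' hfeas
  have hx'b : ∀ i, x' i = 0 ∨ x' i = 1 := hfeas.1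
  have hx's : (∑ i, x' i) = (p:ℝ) := hfeas.2.1
  set s' := univ.filter (fun i => x' i = 1) with hs'def
  have hxeq : x' = xs s' := by
    funext i
    rcases hx'b i with hh | hh
    · have : i ∉ s' := by
        rw [hs'def]
        simp only [Finset.mem_filter]
        rintro ⟨-, hc⟩
        rw [hh] at hc
        exact one_ne_zero hc.symm
      simp [hxsdef, this, hh]
    · have : i ∈ s' := by
        rw [hs'def]
        exact Finset.mem_filter.mpr ⟨Finset.mem_univ i, hh⟩
      simp [hxsdef, this, hh]
  have hcard : s'.card = p := by
    have h1 : (∑ i, x' i) = ∑ i, (if x' i = 1 then (1:ℝ) else 0) := by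
      refine Finset.sum_congr rfl fun i _ => ?_
      rcases hx'b i with hh | hh <;> simp [hh]
    have h2 : (∑ i, (if x' i = 1 then (1:ℝ) else 0)) = (s'.card : ℝ) :=
      indsum_plain n _
    rw [h1, h2] at hx's
    exact_mod_cast hx's
  have hs'm : s' ∈ 𝒮 := by
    rw [h𝒮def]
    exact Finset.mem_powersetCard.mpr ⟨Finset.subset_univ s', hcard⟩
  calc Obj8 n C cl cu Γ (xs s₀) (Z s₀) (ZB s₀) (PV s₀)
      ≤ Obj8 n C cl cu Γ (xs s') (Z s') (ZB s') (PV s') := hmin0 s' hs'm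
    _ ≤ Obj8 n C cl cu Γ (xs s') z' zb' π' := by
        refine hMin s' hs'm z' zb' π' ?_
        rw [← hxeq]
        exact hfeas
    _ = Obj8 n C cl cu Γ x' z' zb' π' := by rw [hxeq]
end
end

section
/- Let n ≥ 1 and let M be the (4n+5) × 5n real matrix whose columns are indexed by five consecutive blocks of size n (the x-block, z-block, z̄-block, z'-block, z̄'-block) and whose rows are: row a₁ with entry 1 in every x-column and 0 elsewhere; row a₂ with entry 1 in every z-column and 0 elsewhere; row a₃ with entry 1 in every z̄-column and 0 elsewhere; row a₄ with entry 1 in every z'-column and 0 elsewhere; row a₅ with entry 1 in every z̄'-column and 0 elsewhere; for each i ∈ [n], row b_i with entry 1 in the i-th x-column and −1 in the i-th z'-column and 0 elsewhere; row c_i with entry 1 in the i-th z-column and −1 in the i-th z'-column and 0 elsewhere; row d_i with entry 1 in the i-th x-column and −1 in the i-th z̄'-column and 0 elsewhere; row e_i with entry 1 in the i-th z̄-column and −1 in the i-th z̄'-column and 0 elsewhere. Then M is totally unimodular. -/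
noncomputable section

set_option maxHeartbeats 2000000

def ALPHA (A : Fin 5 → Bool) : Fin 5 → ℤ :=
  match A 0, A 1, A 2, A 3, A 4 with
  | false, false, false, false, false => ![0,0,0,0,0]
  | false, false, false, false, true => ![0,0,0,0,1]
  | false, false, false, true, false => ![0,0,0,1,0]
  | false, false, false, true, true => ![0,0,0,1,-1]
  | false, false, true, false, false => ![0,0,1,0,0]
  | false, false, true, false, true => ![0,0,1,0,-1]
  | false, false, true, true, false => ![0,0,1,-1,0]
  | false, false, true, true, true => ![0,0,1,1,-1]
  | false, true, false, false, false => ![0,1,0,0,0]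
  | false, true, false, false, true => ![0,1,0,0,-1]
  | false, true, false, true, false => ![0,1,0,-1,0]
  | false, true, false, true, true => ![0,1,0,-1,1]
  | false, true, true, false, false => ![0,1,-1,0,0]
  | false, true, true, false, true => ![0,1,1,0,-1]
  | false, true, true, true, false => ![0,1,1,-1,0]
  | false, true, true, true, true => ![0,1,-1,-1,1]
  | true, false, false, false, false => ![1,0,0,0,0]
  | true, false, false, false, true => ![1,0,0,0,-1]
  | true, false, false, true, false => ![1,0,0,-1,0]
  | true, false, false, true, true => ![1,0,0,-1,-1]
  | true, false, true, false, false => ![1,0,-1,0,0]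
  | true, false, true, false, true => ![1,0,1,0,-1]
  | true, false, true, true, false => ![1,0,-1,-1,0]
  | true, false, true, true, true => ![1,0,1,-1,-1]
  | true, true, false, false, false => ![1,-1,0,0,0]
  | true, true, false, false, true => ![1,-1,0,0,-1]
  | true, true, false, true, false => ![1,1,0,-1,0]
  | true, true, false, true, true => ![1,1,0,-1,-1]
  | true, true, true, false, false => ![1,-1,-1,0,0]
  | true, true, true, false, true => ![1,-1,1,0,-1]
  | true, true, true, true, false => ![1,1,-1,-1,0]
  | true, true, true, true, true => ![1,1,1,-1,-1]

def LOC (A : Fin 5 → Bool) (P : Fin 4 → Bool) : Fin 4 → ℤ :=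
  match A 0, A 1, A 2, A 3, A 4, P 0, P 1, P 2, P 3 with
  | false, false, false, false, false, false, false, false, false => ![1,1,1,1]
  | false, false, false, false, false, false, false, false, true => ![1,1,1,1]
  | false, false, false, false, false, false, false, true, false => ![1,1,1,1]
  | false, false, false, false, false, false, false, true, true => ![1,1,1,-1]
  | false, false, false, false, false, false, true, false, false => ![1,1,1,1]
  | false, false, false, false, false, false, true, false, true => ![1,1,1,1]
  | false, false, false, false, false, false, true, true, false => ![1,1,1,1]
  | false, false, false, false, false, false, true, true, true => ![1,1,1,-1]
  | false, false, false, false, false, true, false, false, false => ![1,1,1,1]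
  | false, false, false, false, false, true, false, false, true => ![1,1,1,1]
  | false, false, false, false, false, true, false, true, false => ![1,1,-1,1]
  | false, false, false, false, false, true, false, true, true => ![1,1,-1,1]
  | false, false, false, false, false, true, true, false, false => ![1,-1,1,1]
  | false, false, false, false, false, true, true, false, true => ![1,-1,1,1]
  | false, false, false, false, false, true, true, true, false => ![1,-1,-1,1]
  | false, false, false, false, false, true, true, true, true => ![1,-1,-1,1]
  | false, false, false, false, true, false, false, false, false => ![1,1,1,1]
  | false, false, false, false, true, false, false, false, true => ![1,1,1,1]
  | false, false, false, false, true, false, false, true, false => ![1,1,1,1]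
  | false, false, false, false, true, false, false, true, true => ![1,1,1,1]
  | false, false, false, false, true, false, true, false, false => ![1,1,1,1]
  | false, false, false, false, true, false, true, false, true => ![1,1,1,1]
  | false, false, false, false, true, false, true, true, false => ![1,1,1,1]
  | false, false, false, false, true, false, true, true, true => ![1,1,1,1]
  | false, false, false, false, true, true, false, false, false => ![1,1,1,1]
  | false, false, false, false, true, true, false, false, true => ![1,1,1,1]
  | false, false, false, false, true, true, false, true, false => ![-1,1,1,1]
  | false, false, false, false, true, true, false, true, true => ![1,1,-1,1]
  | false, false, false, false, true, true, true, false, false => ![1,-1,1,1]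
  | false, false, false, false, true, true, true, false, true => ![1,-1,1,1]
  | false, false, false, false, true, true, true, true, false => ![-1,1,1,1]
  | false, false, false, false, true, true, true, true, true => ![1,-1,-1,1]
  | false, false, false, true, false, false, false, false, false => ![1,1,1,1]
  | false, false, false, true, false, false, false, false, true => ![1,1,1,1]
  | false, false, false, true, false, false, false, true, false => ![1,1,1,1]
  | false, false, false, true, false, false, false, true, true => ![1,1,1,-1]
  | false, false, false, true, false, false, true, false, false => ![1,1,1,1]
  | false, false, false, true, false, false, true, false, true => ![1,1,1,1]
  | false, false, false, true, false, false, true, true, false => ![1,1,1,1]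
  | false, false, false, true, false, false, true, true, true => ![1,1,1,-1]
  | false, false, false, true, false, true, false, false, false => ![1,1,1,1]
  | false, false, false, true, false, true, false, false, true => ![1,1,1,1]
  | false, false, false, true, false, true, false, true, false => ![1,1,-1,1]
  | false, false, false, true, false, true, false, true, true => ![1,1,-1,1]
  | false, false, false, true, false, true, true, false, false => ![1,1,1,1]
  | false, false, false, true, false, true, true, false, true => ![1,1,1,1]
  | false, false, false, true, false, true, true, true, false => ![1,1,-1,1]
  | false, false, false, true, false, true, true, true, true => ![1,1,-1,1]
  | false, false, false, true, true, false, false, false, false => ![1,1,1,1]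
  | false, false, false, true, true, false, false, false, true => ![1,1,1,-1]
  | false, false, false, true, true, false, false, true, false => ![1,1,-1,1]
  | false, false, false, true, true, false, false, true, true => ![1,1,1,-1]
  | false, false, false, true, true, false, true, false, false => ![1,1,1,1]
  | false, false, false, true, true, false, true, false, true => ![1,1,1,-1]
  | false, false, false, true, true, false, true, true, false => ![1,1,-1,1]
  | false, false, false, true, true, false, true, true, true => ![1,1,1,-1]
  | false, false, false, true, true, true, false, false, false => ![1,1,1,1]
  | false, false, false, true, true, true, false, false, true => ![1,1,1,-1]
  | false, false, false, true, true, true, false, true, false => ![1,1,-1,1]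
  | false, false, false, true, true, true, false, true, true => ![1,1,-1,1]
  | false, false, false, true, true, true, true, false, false => ![1,1,1,1]
  | false, false, false, true, true, true, true, false, true => ![1,1,1,-1]
  | false, false, false, true, true, true, true, true, false => ![1,1,-1,1]
  | false, false, false, true, true, true, true, true, true => ![1,1,-1,1]
  | false, false, true, false, false, false, false, false, false => ![1,1,1,1]
  | false, false, true, false, false, false, false, false, true => ![1,1,1,-1]
  | false, false, true, false, false, false, false, true, false => ![1,1,1,1]
  | false, false, true, false, false, false, false, true, true => ![1,1,1,-1]
  | false, false, true, false, false, false, true, false, false => ![1,1,1,1]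
  | false, false, true, false, false, false, true, false, true => ![1,1,1,-1]
  | false, false, true, false, false, false, true, true, false => ![1,1,1,1]
  | false, false, true, false, false, false, true, true, true => ![1,1,1,-1]
  | false, false, true, false, false, true, false, false, false => ![1,1,1,1]
  | false, false, true, false, false, true, false, false, true => ![1,1,1,-1]
  | false, false, true, false, false, true, false, true, false => ![1,1,-1,1]
  | false, false, true, false, false, true, false, true, true => ![-1,1,1,-1]
  | false, false, true, false, false, true, true, false, false => ![1,-1,1,1]
  | false, false, true, false, false, true, true, false, true => ![1,-1,1,-1]
  | false, false, true, false, false, true, true, true, false => ![1,-1,-1,1]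
  | false, false, true, false, false, true, true, true, true => ![-1,1,1,-1]
  | false, false, true, false, true, false, false, false, false => ![1,1,1,1]
  | false, false, true, false, true, false, false, false, true => ![1,1,1,-1]
  | false, false, true, false, true, false, false, true, false => ![1,1,-1,1]
  | false, false, true, false, true, false, false, true, true => ![1,1,1,-1]
  | false, false, true, false, true, false, true, false, false => ![1,1,1,1]
  | false, false, true, false, true, false, true, false, true => ![1,1,1,-1]
  | false, false, true, false, true, false, true, true, false => ![1,1,-1,1]
  | false, false, true, false, true, false, true, true, true => ![1,1,1,-1]
  | false, false, true, false, true, true, false, false, false => ![1,1,1,1]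
  | false, false, true, false, true, true, false, false, true => ![1,1,1,-1]
  | false, false, true, false, true, true, false, true, false => ![1,1,-1,1]
  | false, false, true, false, true, true, false, true, true => ![1,1,-1,-1]
  | false, false, true, false, true, true, true, false, false => ![1,-1,1,1]
  | false, false, true, false, true, true, true, false, true => ![1,-1,1,-1]
  | false, false, true, false, true, true, true, true, false => ![1,-1,-1,1]
  | false, false, true, false, true, true, true, true, true => ![1,-1,-1,-1]
  | false, false, true, true, false, false, false, false, false => ![1,1,1,1]
  | false, false, true, true, false, false, false, false, true => ![1,1,1,-1]
  | false, false, true, true, false, false, false, true, false => ![1,1,1,1]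
  | false, false, true, true, false, false, false, true, true => ![1,1,1,-1]
  | false, false, true, true, false, false, true, false, false => ![1,-1,1,1]
  | false, false, true, true, false, false, true, false, true => ![1,-1,1,-1]
  | false, false, true, true, false, false, true, true, false => ![1,-1,1,1]
  | false, false, true, true, false, false, true, true, true => ![1,-1,1,-1]
  | false, false, true, true, false, true, false, false, false => ![-1,1,1,1]
  | false, false, true, true, false, true, false, false, true => ![-1,1,1,-1]
  | false, false, true, true, false, true, false, true, false => ![-1,1,1,1]
  | false, false, true, true, false, true, false, true, true => ![-1,1,1,-1]
  | false, false, true, true, false, true, true, false, false => ![1,-1,1,1]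
  | false, false, true, true, false, true, true, false, true => ![1,-1,1,-1]
  | false, false, true, true, false, true, true, true, false => ![1,-1,-1,1]
  | false, false, true, true, false, true, true, true, true => ![-1,1,1,-1]
  | false, false, true, true, true, false, false, false, false => ![1,1,1,1]
  | false, false, true, true, true, false, false, false, true => ![1,1,1,-1]
  | false, false, true, true, true, false, false, true, false => ![1,1,-1,1]
  | false, false, true, true, true, false, false, true, true => ![1,1,1,-1]
  | false, false, true, true, true, false, true, false, false => ![1,1,1,1]
  | false, false, true, true, true, false, true, false, true => ![1,1,1,-1]
  | false, false, true, true, true, false, true, true, false => ![1,1,-1,1]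
  | false, false, true, true, true, false, true, true, true => ![1,1,1,-1]
  | false, false, true, true, true, true, false, false, false => ![1,1,1,1]
  | false, false, true, true, true, true, false, false, true => ![1,1,1,-1]
  | false, false, true, true, true, true, false, true, false => ![1,1,-1,1]
  | false, false, true, true, true, true, false, true, true => ![1,1,-1,-1]
  | false, false, true, true, true, true, true, false, false => ![1,1,1,1]
  | false, false, true, true, true, true, true, false, true => ![1,1,1,-1]
  | false, false, true, true, true, true, true, true, false => ![1,1,-1,1]
  | false, false, true, true, true, true, true, true, true => ![1,1,-1,-1]
  | false, true, false, false, false, false, false, false, false => ![1,1,1,1]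
  | false, true, false, false, false, false, false, false, true => ![1,1,1,1]
  | false, true, false, false, false, false, false, true, false => ![1,1,1,1]
  | false, true, false, false, false, false, false, true, true => ![1,1,1,-1]
  | false, true, false, false, false, false, true, false, false => ![1,-1,1,1]
  | false, true, false, false, false, false, true, false, true => ![1,-1,1,1]
  | false, true, false, false, false, false, true, true, false => ![1,-1,1,1]
  | false, true, false, false, false, false, true, true, true => ![1,-1,1,-1]
  | false, true, false, false, false, true, false, false, false => ![1,1,1,1]
  | false, true, false, false, false, true, false, false, true => ![1,1,1,1]
  | false, true, false, false, false, true, false, true, false => ![1,1,-1,1]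
  | false, true, false, false, false, true, false, true, true => ![1,1,-1,1]
  | false, true, false, false, false, true, true, false, false => ![1,-1,1,1]
  | false, true, false, false, false, true, true, false, true => ![1,-1,1,1]
  | false, true, false, false, false, true, true, true, false => ![1,-1,-1,1]
  | false, true, false, false, false, true, true, true, true => ![1,-1,-1,1]
  | false, true, false, false, true, false, false, false, false => ![1,1,1,1]
  | false, true, false, false, true, false, false, false, true => ![1,1,1,-1]
  | false, true, false, false, true, false, false, true, false => ![1,1,-1,1]
  | false, true, false, false, true, false, false, true, true => ![1,1,1,-1]
  | false, true, false, false, true, false, true, false, false => ![1,-1,1,1]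
  | false, true, false, false, true, false, true, false, true => ![1,-1,1,-1]
  | false, true, false, false, true, false, true, true, false => ![1,-1,-1,1]
  | false, true, false, false, true, false, true, true, true => ![1,-1,1,-1]
  | false, true, false, false, true, true, false, false, false => ![1,1,1,1]
  | false, true, false, false, true, true, false, false, true => ![1,1,1,-1]
  | false, true, false, false, true, true, false, true, false => ![1,1,-1,1]
  | false, true, false, false, true, true, false, true, true => ![1,1,-1,1]
  | false, true, false, false, true, true, true, false, false => ![1,-1,1,1]
  | false, true, false, false, true, true, true, false, true => ![1,-1,1,-1]
  | false, true, false, false, true, true, true, true, false => ![1,-1,-1,1]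
  | false, true, false, false, true, true, true, true, true => ![1,-1,-1,1]
  | false, true, false, true, false, false, false, false, false => ![1,1,1,1]
  | false, true, false, true, false, false, false, false, true => ![1,1,1,1]
  | false, true, false, true, false, false, false, true, false => ![1,1,1,1]
  | false, true, false, true, false, false, false, true, true => ![1,1,1,-1]
  | false, true, false, true, false, false, true, false, false => ![1,-1,1,1]
  | false, true, false, true, false, false, true, false, true => ![1,-1,1,1]
  | false, true, false, true, false, false, true, true, false => ![1,-1,1,1]
  | false, true, false, true, false, false, true, true, true => ![1,-1,1,-1]
  | false, true, false, true, false, true, false, false, false => ![-1,1,1,1]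
  | false, true, false, true, false, true, false, false, true => ![-1,1,1,1]
  | false, true, false, true, false, true, false, true, false => ![-1,1,1,1]
  | false, true, false, true, false, true, false, true, true => ![-1,1,1,-1]
  | false, true, false, true, false, true, true, false, false => ![1,-1,1,1]
  | false, true, false, true, false, true, true, false, true => ![1,-1,1,1]
  | false, true, false, true, false, true, true, true, false => ![1,-1,-1,1]
  | false, true, false, true, false, true, true, true, true => ![1,-1,-1,1]
  | false, true, false, true, true, false, false, false, false => ![1,1,1,1]
  | false, true, false, true, true, false, false, false, true => ![1,1,1,1]
  | false, true, false, true, true, false, false, true, false => ![1,1,1,1]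
  | false, true, false, true, true, false, false, true, true => ![1,1,1,1]
  | false, true, false, true, true, false, true, false, false => ![1,-1,1,1]
  | false, true, false, true, true, false, true, false, true => ![1,-1,1,1]
  | false, true, false, true, true, false, true, true, false => ![1,-1,1,1]
  | false, true, false, true, true, false, true, true, true => ![1,-1,1,1]
  | false, true, false, true, true, true, false, false, false => ![-1,1,1,1]
  | false, true, false, true, true, true, false, false, true => ![-1,1,1,1]
  | false, true, false, true, true, true, false, true, false => ![-1,1,1,1]
  | false, true, false, true, true, true, false, true, true => ![-1,1,1,1]
  | false, true, false, true, true, true, true, false, false => ![1,-1,1,1]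
  | false, true, false, true, true, true, true, false, true => ![1,-1,1,1]
  | false, true, false, true, true, true, true, true, false => ![-1,-1,1,1]
  | false, true, false, true, true, true, true, true, true => ![1,-1,-1,1]
  | false, true, true, false, false, false, false, false, false => ![1,1,1,1]
  | false, true, true, false, false, false, false, false, true => ![1,1,1,1]
  | false, true, true, false, false, false, false, true, false => ![1,1,1,1]
  | false, true, true, false, false, false, false, true, true => ![1,1,-1,1]
  | false, true, true, false, false, false, true, false, false => ![1,-1,1,1]
  | false, true, true, false, false, false, true, false, true => ![1,-1,1,1]
  | false, true, true, false, false, false, true, true, false => ![1,-1,1,1]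
  | false, true, true, false, false, false, true, true, true => ![1,-1,-1,1]
  | false, true, true, false, false, true, false, false, false => ![1,1,1,1]
  | false, true, true, false, false, true, false, false, true => ![1,1,1,1]
  | false, true, true, false, false, true, false, true, false => ![1,1,-1,1]
  | false, true, true, false, false, true, false, true, true => ![1,1,-1,1]
  | false, true, true, false, false, true, true, false, false => ![1,-1,1,1]
  | false, true, true, false, false, true, true, false, true => ![1,-1,1,1]
  | false, true, true, false, false, true, true, true, false => ![1,-1,-1,1]
  | false, true, true, false, false, true, true, true, true => ![1,-1,-1,1]
  | false, true, true, false, true, false, false, false, false => ![1,1,1,1]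
  | false, true, true, false, true, false, false, false, true => ![1,1,1,-1]
  | false, true, true, false, true, false, false, true, false => ![1,1,-1,1]
  | false, true, true, false, true, false, false, true, true => ![1,1,1,-1]
  | false, true, true, false, true, false, true, false, false => ![1,-1,1,1]
  | false, true, true, false, true, false, true, false, true => ![1,-1,1,-1]
  | false, true, true, false, true, false, true, true, false => ![1,-1,-1,1]
  | false, true, true, false, true, false, true, true, true => ![1,-1,1,-1]
  | false, true, true, false, true, true, false, false, false => ![1,1,1,1]
  | false, true, true, false, true, true, false, false, true => ![1,1,1,-1]
  | false, true, true, false, true, true, false, true, false => ![1,1,-1,1]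
  | false, true, true, false, true, true, false, true, true => ![1,1,-1,-1]
  | false, true, true, false, true, true, true, false, false => ![1,-1,1,1]
  | false, true, true, false, true, true, true, false, true => ![1,-1,1,-1]
  | false, true, true, false, true, true, true, true, false => ![1,-1,-1,1]
  | false, true, true, false, true, true, true, true, true => ![1,-1,-1,-1]
  | false, true, true, true, false, false, false, false, false => ![1,1,1,1]
  | false, true, true, true, false, false, false, false, true => ![1,1,1,-1]
  | false, true, true, true, false, false, false, true, false => ![1,1,1,1]
  | false, true, true, true, false, false, false, true, true => ![1,1,1,-1]
  | false, true, true, true, false, false, true, false, false => ![1,-1,1,1]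
  | false, true, true, true, false, false, true, false, true => ![1,-1,1,-1]
  | false, true, true, true, false, false, true, true, false => ![1,-1,1,1]
  | false, true, true, true, false, false, true, true, true => ![1,-1,1,-1]
  | false, true, true, true, false, true, false, false, false => ![-1,1,1,1]
  | false, true, true, true, false, true, false, false, true => ![-1,1,1,-1]
  | false, true, true, true, false, true, false, true, false => ![-1,1,1,1]
  | false, true, true, true, false, true, false, true, true => ![-1,1,1,-1]
  | false, true, true, true, false, true, true, false, false => ![1,-1,1,1]
  | false, true, true, true, false, true, true, false, true => ![1,-1,1,-1]
  | false, true, true, true, false, true, true, true, false => ![1,-1,-1,1]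
  | false, true, true, true, false, true, true, true, true => ![-1,-1,1,-1]
  | false, true, true, true, true, false, false, false, false => ![1,1,1,1]
  | false, true, true, true, true, false, false, false, true => ![1,1,1,1]
  | false, true, true, true, true, false, false, true, false => ![1,1,1,1]
  | false, true, true, true, true, false, false, true, true => ![1,1,1,1]
  | false, true, true, true, true, false, true, false, false => ![1,-1,1,1]
  | false, true, true, true, true, false, true, false, true => ![1,-1,1,1]
  | false, true, true, true, true, false, true, true, false => ![1,-1,1,1]
  | false, true, true, true, true, false, true, true, true => ![1,-1,1,1]
  | false, true, true, true, true, true, false, false, false => ![-1,1,1,1]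
  | false, true, true, true, true, true, false, false, true => ![-1,1,1,1]
  | false, true, true, true, true, true, false, true, false => ![-1,1,1,1]
  | false, true, true, true, true, true, false, true, true => ![-1,1,1,1]
  | false, true, true, true, true, true, true, false, false => ![1,-1,1,1]
  | false, true, true, true, true, true, true, false, true => ![1,-1,1,1]
  | false, true, true, true, true, true, true, true, false => ![-1,-1,1,1]
  | false, true, true, true, true, true, true, true, true => ![1,-1,-1,1]
  | true, false, false, false, false, false, false, false, false => ![1,1,1,1]
  | true, false, false, false, false, false, false, false, true => ![1,1,1,1]
  | true, false, false, false, false, false, false, true, false => ![1,1,-1,1]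
  | true, false, false, false, false, false, false, true, true => ![1,1,-1,1]
  | true, false, false, false, false, false, true, false, false => ![1,1,1,1]
  | true, false, false, false, false, false, true, false, true => ![1,1,1,1]
  | true, false, false, false, false, false, true, true, false => ![1,1,-1,1]
  | true, false, false, false, false, false, true, true, true => ![1,1,-1,1]
  | true, false, false, false, false, true, false, false, false => ![-1,1,1,1]
  | true, false, false, false, false, true, false, false, true => ![-1,1,1,1]
  | true, false, false, false, false, true, false, true, false => ![1,1,-1,1]
  | true, false, false, false, false, true, false, true, true => ![1,1,-1,1]
  | true, false, false, false, false, true, true, false, false => ![-1,1,1,1]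
  | true, false, false, false, false, true, true, false, true => ![-1,1,1,1]
  | true, false, false, false, false, true, true, true, false => ![1,-1,-1,1]
  | true, false, false, false, false, true, true, true, true => ![1,-1,-1,1]
  | true, false, false, false, true, false, false, false, false => ![1,1,1,1]
  | true, false, false, false, true, false, false, false, true => ![1,1,1,-1]
  | true, false, false, false, true, false, false, true, false => ![1,1,-1,1]
  | true, false, false, false, true, false, false, true, true => ![1,1,-1,1]
  | true, false, false, false, true, false, true, false, false => ![1,1,1,1]
  | true, false, false, false, true, false, true, false, true => ![1,1,1,-1]
  | true, false, false, false, true, false, true, true, false => ![1,1,-1,1]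
  | true, false, false, false, true, false, true, true, true => ![1,1,-1,1]
  | true, false, false, false, true, true, false, false, false => ![-1,1,1,1]
  | true, false, false, false, true, true, false, false, true => ![-1,1,1,-1]
  | true, false, false, false, true, true, false, true, false => ![1,1,-1,1]
  | true, false, false, false, true, true, false, true, true => ![1,1,-1,1]
  | true, false, false, false, true, true, true, false, false => ![-1,1,1,1]
  | true, false, false, false, true, true, true, false, true => ![-1,1,1,-1]
  | true, false, false, false, true, true, true, true, false => ![1,-1,-1,1]
  | true, false, false, false, true, true, true, true, true => ![1,-1,-1,1]
  | true, false, false, true, false, false, false, false, false => ![1,1,1,1]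
  | true, false, false, true, false, false, false, false, true => ![1,1,1,1]
  | true, false, false, true, false, false, false, true, false => ![1,1,-1,1]
  | true, false, false, true, false, false, false, true, true => ![1,1,-1,1]
  | true, false, false, true, false, false, true, false, false => ![1,-1,1,1]
  | true, false, false, true, false, false, true, false, true => ![1,-1,1,1]
  | true, false, false, true, false, false, true, true, false => ![1,-1,-1,1]
  | true, false, false, true, false, false, true, true, true => ![1,-1,-1,1]
  | true, false, false, true, false, true, false, false, false => ![-1,1,1,1]
  | true, false, false, true, false, true, false, false, true => ![-1,1,1,1]
  | true, false, false, true, false, true, false, true, false => ![-1,1,1,1]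
  | true, false, false, true, false, true, false, true, true => ![-1,1,1,-1]
  | true, false, false, true, false, true, true, false, false => ![-1,1,1,1]
  | true, false, false, true, false, true, true, false, true => ![-1,1,1,1]
  | true, false, false, true, false, true, true, true, false => ![1,-1,-1,1]
  | true, false, false, true, false, true, true, true, true => ![1,-1,-1,1]
  | true, false, false, true, true, false, false, false, false => ![1,1,1,1]
  | true, false, false, true, true, false, false, false, true => ![1,1,1,-1]
  | true, false, false, true, true, false, false, true, false => ![1,1,-1,1]
  | true, false, false, true, true, false, false, true, true => ![1,1,-1,1]
  | true, false, false, true, true, false, true, false, false => ![1,-1,1,1]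
  | true, false, false, true, true, false, true, false, true => ![1,-1,1,-1]
  | true, false, false, true, true, false, true, true, false => ![1,-1,-1,1]
  | true, false, false, true, true, false, true, true, true => ![1,-1,-1,1]
  | true, false, false, true, true, true, false, false, false => ![-1,1,1,1]
  | true, false, false, true, true, true, false, false, true => ![-1,1,1,-1]
  | true, false, false, true, true, true, false, true, false => ![-1,1,-1,1]
  | true, false, false, true, true, true, false, true, true => ![-1,1,1,-1]
  | true, false, false, true, true, true, true, false, false => ![-1,1,1,1]
  | true, false, false, true, true, true, true, false, true => ![-1,1,1,-1]
  | true, false, false, true, true, true, true, true, false => ![1,-1,-1,1]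
  | true, false, false, true, true, true, true, true, true => ![1,-1,-1,1]
  | true, false, true, false, false, false, false, false, false => ![1,1,1,1]
  | true, false, true, false, false, false, false, false, true => ![1,1,1,1]
  | true, false, true, false, false, false, false, true, false => ![1,1,-1,1]
  | true, false, true, false, false, false, false, true, true => ![1,1,-1,1]
  | true, false, true, false, false, false, true, false, false => ![1,1,1,1]
  | true, false, true, false, false, false, true, false, true => ![1,1,1,1]
  | true, false, true, false, false, false, true, true, false => ![1,1,-1,1]
  | true, false, true, false, false, false, true, true, true => ![1,1,-1,1]
  | true, false, true, false, false, true, false, false, false => ![-1,1,1,1]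
  | true, false, true, false, false, true, false, false, true => ![-1,1,1,1]
  | true, false, true, false, false, true, false, true, false => ![1,1,-1,1]
  | true, false, true, false, false, true, false, true, true => ![1,1,-1,1]
  | true, false, true, false, false, true, true, false, false => ![-1,1,1,1]
  | true, false, true, false, false, true, true, false, true => ![-1,1,1,1]
  | true, false, true, false, false, true, true, true, false => ![1,-1,-1,1]
  | true, false, true, false, false, true, true, true, true => ![1,-1,-1,1]
  | true, false, true, false, true, false, false, false, false => ![1,1,1,1]
  | true, false, true, false, true, false, false, false, true => ![1,1,1,-1]
  | true, false, true, false, true, false, false, true, false => ![1,1,-1,1]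
  | true, false, true, false, true, false, false, true, true => ![1,1,-1,-1]
  | true, false, true, false, true, false, true, false, false => ![1,1,1,1]
  | true, false, true, false, true, false, true, false, true => ![1,1,1,-1]
  | true, false, true, false, true, false, true, true, false => ![1,1,-1,1]
  | true, false, true, false, true, false, true, true, true => ![1,1,-1,-1]
  | true, false, true, false, true, true, false, false, false => ![-1,1,1,1]
  | true, false, true, false, true, true, false, false, true => ![-1,1,1,-1]
  | true, false, true, false, true, true, false, true, false => ![1,1,-1,1]
  | true, false, true, false, true, true, false, true, true => ![1,1,-1,-1]
  | true, false, true, false, true, true, true, false, false => ![-1,1,1,1]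
  | true, false, true, false, true, true, true, false, true => ![-1,1,1,-1]
  | true, false, true, false, true, true, true, true, false => ![1,-1,-1,1]
  | true, false, true, false, true, true, true, true, true => ![1,-1,-1,-1]
  | true, false, true, true, false, false, false, false, false => ![1,1,1,1]
  | true, false, true, true, false, false, false, false, true => ![1,1,1,1]
  | true, false, true, true, false, false, false, true, false => ![1,1,-1,1]
  | true, false, true, true, false, false, false, true, true => ![1,1,-1,1]
  | true, false, true, true, false, false, true, false, false => ![1,-1,1,1]
  | true, false, true, true, false, false, true, false, true => ![1,-1,1,1]
  | true, false, true, true, false, false, true, true, false => ![1,-1,-1,1]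
  | true, false, true, true, false, false, true, true, true => ![1,-1,-1,1]
  | true, false, true, true, false, true, false, false, false => ![-1,1,1,1]
  | true, false, true, true, false, true, false, false, true => ![-1,1,1,1]
  | true, false, true, true, false, true, false, true, false => ![-1,1,1,1]
  | true, false, true, true, false, true, false, true, true => ![-1,1,-1,1]
  | true, false, true, true, false, true, true, false, false => ![-1,1,1,1]
  | true, false, true, true, false, true, true, false, true => ![-1,1,1,1]
  | true, false, true, true, false, true, true, true, false => ![1,-1,-1,1]
  | true, false, true, true, false, true, true, true, true => ![1,-1,-1,1]
  | true, false, true, true, true, false, false, false, false => ![1,1,1,1]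
  | true, false, true, true, true, false, false, false, true => ![1,1,1,-1]
  | true, false, true, true, true, false, false, true, false => ![1,1,-1,1]
  | true, false, true, true, true, false, false, true, true => ![1,1,-1,-1]
  | true, false, true, true, true, false, true, false, false => ![1,-1,1,1]
  | true, false, true, true, true, false, true, false, true => ![1,-1,1,-1]
  | true, false, true, true, true, false, true, true, false => ![1,-1,-1,1]
  | true, false, true, true, true, false, true, true, true => ![1,-1,-1,-1]
  | true, false, true, true, true, true, false, false, false => ![-1,1,1,1]
  | true, false, true, true, true, true, false, false, true => ![-1,1,1,-1]
  | true, false, true, true, true, true, false, true, false => ![-1,1,-1,1]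
  | true, false, true, true, true, true, false, true, true => ![-1,1,1,-1]
  | true, false, true, true, true, true, true, false, false => ![-1,1,1,1]
  | true, false, true, true, true, true, true, false, true => ![-1,1,1,-1]
  | true, false, true, true, true, true, true, true, false => ![1,-1,-1,1]
  | true, false, true, true, true, true, true, true, true => ![1,-1,-1,-1]
  | true, true, false, false, false, false, false, false, false => ![1,1,1,1]
  | true, true, false, false, false, false, false, false, true => ![1,1,1,1]
  | true, true, false, false, false, false, false, true, false => ![1,1,-1,1]
  | true, true, false, false, false, false, false, true, true => ![1,1,-1,1]
  | true, true, false, false, false, false, true, false, false => ![1,1,1,1]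
  | true, true, false, false, false, false, true, false, true => ![1,1,1,1]
  | true, true, false, false, false, false, true, true, false => ![1,1,-1,1]
  | true, true, false, false, false, false, true, true, true => ![1,1,-1,1]
  | true, true, false, false, false, true, false, false, false => ![-1,1,1,1]
  | true, true, false, false, false, true, false, false, true => ![-1,1,1,1]
  | true, true, false, false, false, true, false, true, false => ![1,1,-1,1]
  | true, true, false, false, false, true, false, true, true => ![1,1,-1,1]
  | true, true, false, false, false, true, true, false, false => ![-1,1,1,1]
  | true, true, false, false, false, true, true, false, true => ![-1,1,1,1]
  | true, true, false, false, false, true, true, true, false => ![-1,1,1,1]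
  | true, true, false, false, false, true, true, true, true => ![-1,1,1,-1]
  | true, true, false, false, true, false, false, false, false => ![1,1,1,1]
  | true, true, false, false, true, false, false, false, true => ![1,1,1,-1]
  | true, true, false, false, true, false, false, true, false => ![1,1,-1,1]
  | true, true, false, false, true, false, false, true, true => ![1,1,-1,1]
  | true, true, false, false, true, false, true, false, false => ![1,1,1,1]
  | true, true, false, false, true, false, true, false, true => ![1,1,1,-1]
  | true, true, false, false, true, false, true, true, false => ![1,1,-1,1]
  | true, true, false, false, true, false, true, true, true => ![1,1,-1,1]
  | true, true, false, false, true, true, false, false, false => ![-1,1,1,1]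
  | true, true, false, false, true, true, false, false, true => ![-1,1,1,-1]
  | true, true, false, false, true, true, false, true, false => ![1,1,-1,1]
  | true, true, false, false, true, true, false, true, true => ![1,1,-1,1]
  | true, true, false, false, true, true, true, false, false => ![-1,1,1,1]
  | true, true, false, false, true, true, true, false, true => ![-1,1,1,-1]
  | true, true, false, false, true, true, true, true, false => ![-1,1,-1,1]
  | true, true, false, false, true, true, true, true, true => ![-1,1,1,-1]
  | true, true, false, true, false, false, false, false, false => ![1,1,1,1]
  | true, true, false, true, false, false, false, false, true => ![1,1,1,1]
  | true, true, false, true, false, false, false, true, false => ![1,1,-1,1]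
  | true, true, false, true, false, false, false, true, true => ![1,1,-1,1]
  | true, true, false, true, false, false, true, false, false => ![1,-1,1,1]
  | true, true, false, true, false, false, true, false, true => ![1,-1,1,1]
  | true, true, false, true, false, false, true, true, false => ![1,-1,-1,1]
  | true, true, false, true, false, false, true, true, true => ![1,-1,-1,1]
  | true, true, false, true, false, true, false, false, false => ![-1,1,1,1]
  | true, true, false, true, false, true, false, false, true => ![-1,1,1,1]
  | true, true, false, true, false, true, false, true, false => ![-1,1,1,1]
  | true, true, false, true, false, true, false, true, true => ![-1,1,1,-1]
  | true, true, false, true, false, true, true, false, false => ![-1,-1,1,1]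
  | true, true, false, true, false, true, true, false, true => ![-1,-1,1,1]
  | true, true, false, true, false, true, true, true, false => ![1,-1,-1,1]
  | true, true, false, true, false, true, true, true, true => ![1,-1,-1,1]
  | true, true, false, true, true, false, false, false, false => ![1,1,1,1]
  | true, true, false, true, true, false, false, false, true => ![1,1,1,-1]
  | true, true, false, true, true, false, false, true, false => ![1,1,-1,1]
  | true, true, false, true, true, false, false, true, true => ![1,1,-1,1]
  | true, true, false, true, true, false, true, false, false => ![1,-1,1,1]
  | true, true, false, true, true, false, true, false, true => ![1,-1,1,-1]
  | true, true, false, true, true, false, true, true, false => ![1,-1,-1,1]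
  | true, true, false, true, true, false, true, true, true => ![1,-1,-1,1]
  | true, true, false, true, true, true, false, false, false => ![-1,1,1,1]
  | true, true, false, true, true, true, false, false, true => ![-1,1,1,-1]
  | true, true, false, true, true, true, false, true, false => ![-1,1,-1,1]
  | true, true, false, true, true, true, false, true, true => ![-1,1,1,-1]
  | true, true, false, true, true, true, true, false, false => ![-1,-1,1,1]
  | true, true, false, true, true, true, true, false, true => ![-1,-1,1,-1]
  | true, true, false, true, true, true, true, true, false => ![1,-1,-1,1]
  | true, true, false, true, true, true, true, true, true => ![1,-1,-1,1]
  | true, true, true, false, false, false, false, false, false => ![1,1,1,1]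
  | true, true, true, false, false, false, false, false, true => ![1,1,1,1]
  | true, true, true, false, false, false, false, true, false => ![1,1,-1,1]
  | true, true, true, false, false, false, false, true, true => ![1,1,-1,1]
  | true, true, true, false, false, false, true, false, false => ![1,1,1,1]
  | true, true, true, false, false, false, true, false, true => ![1,1,1,1]
  | true, true, true, false, false, false, true, true, false => ![1,1,-1,1]
  | true, true, true, false, false, false, true, true, true => ![1,1,-1,1]
  | true, true, true, false, false, true, false, false, false => ![-1,1,1,1]
  | true, true, true, false, false, true, false, false, true => ![-1,1,1,1]
  | true, true, true, false, false, true, false, true, false => ![1,1,-1,1]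
  | true, true, true, false, false, true, false, true, true => ![1,1,-1,1]
  | true, true, true, false, false, true, true, false, false => ![-1,1,1,1]
  | true, true, true, false, false, true, true, false, true => ![-1,1,1,1]
  | true, true, true, false, false, true, true, true, false => ![-1,1,1,1]
  | true, true, true, false, false, true, true, true, true => ![-1,1,-1,1]
  | true, true, true, false, true, false, false, false, false => ![1,1,1,1]
  | true, true, true, false, true, false, false, false, true => ![1,1,1,-1]
  | true, true, true, false, true, false, false, true, false => ![1,1,-1,1]
  | true, true, true, false, true, false, false, true, true => ![1,1,-1,-1]
  | true, true, true, false, true, false, true, false, false => ![1,1,1,1]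
  | true, true, true, false, true, false, true, false, true => ![1,1,1,-1]
  | true, true, true, false, true, false, true, true, false => ![1,1,-1,1]
  | true, true, true, false, true, false, true, true, true => ![1,1,-1,-1]
  | true, true, true, false, true, true, false, false, false => ![-1,1,1,1]
  | true, true, true, false, true, true, false, false, true => ![-1,1,1,-1]
  | true, true, true, false, true, true, false, true, false => ![1,1,-1,1]
  | true, true, true, false, true, true, false, true, true => ![1,1,-1,-1]
  | true, true, true, false, true, true, true, false, false => ![-1,1,1,1]
  | true, true, true, false, true, true, true, false, true => ![-1,1,1,-1]
  | true, true, true, false, true, true, true, true, false => ![-1,1,-1,1]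
  | true, true, true, false, true, true, true, true, true => ![-1,1,1,-1]
  | true, true, true, true, false, false, false, false, false => ![1,1,1,1]
  | true, true, true, true, false, false, false, false, true => ![1,1,1,1]
  | true, true, true, true, false, false, false, true, false => ![1,1,-1,1]
  | true, true, true, true, false, false, false, true, true => ![1,1,-1,1]
  | true, true, true, true, false, false, true, false, false => ![1,-1,1,1]
  | true, true, true, true, false, false, true, false, true => ![1,-1,1,1]
  | true, true, true, true, false, false, true, true, false => ![1,-1,-1,1]
  | true, true, true, true, false, false, true, true, true => ![1,-1,-1,1]
  | true, true, true, true, false, true, false, false, false => ![-1,1,1,1]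
  | true, true, true, true, false, true, false, false, true => ![-1,1,1,1]
  | true, true, true, true, false, true, false, true, false => ![-1,1,1,1]
  | true, true, true, true, false, true, false, true, true => ![-1,1,-1,1]
  | true, true, true, true, false, true, true, false, false => ![-1,-1,1,1]
  | true, true, true, true, false, true, true, false, true => ![-1,-1,1,1]
  | true, true, true, true, false, true, true, true, false => ![1,-1,-1,1]
  | true, true, true, true, false, true, true, true, true => ![1,-1,-1,1]
  | true, true, true, true, true, false, false, false, false => ![1,1,1,1]
  | true, true, true, true, true, false, false, false, true => ![1,1,1,-1]
  | true, true, true, true, true, false, false, true, false => ![1,1,-1,1]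
  | true, true, true, true, true, false, false, true, true => ![1,1,-1,-1]
  | true, true, true, true, true, false, true, false, false => ![1,-1,1,1]
  | true, true, true, true, true, false, true, false, true => ![1,-1,1,-1]
  | true, true, true, true, true, false, true, true, false => ![1,-1,-1,1]
  | true, true, true, true, true, false, true, true, true => ![1,-1,-1,-1]
  | true, true, true, true, true, true, false, false, false => ![-1,1,1,1]
  | true, true, true, true, true, true, false, false, true => ![-1,1,1,-1]
  | true, true, true, true, true, true, false, true, false => ![-1,1,-1,1]
  | true, true, true, true, true, true, false, true, true => ![-1,1,1,-1]
  | true, true, true, true, true, true, true, false, false => ![-1,-1,1,1]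
  | true, true, true, true, true, true, true, false, true => ![-1,-1,1,-1]
  | true, true, true, true, true, true, true, true, false => ![1,-1,-1,1]
  | true, true, true, true, true, true, true, true, true => ![1,-1,-1,-1]

def SRC : Fin 4 → Fin 5 := ![0,1,0,2]
def TGT : Fin 4 → Fin 5 := ![3,3,4,4]

lemma core_mem : ∀ (A : Fin 5 → Bool) (P : Fin 4 → Bool) (t : Fin 5),
    ((if A t then ALPHA A t else 0) +
      ∑ w : Fin 4, (if P w then LOC A P w * (if t = SRC w then 1 else if t = TGT w then -1 else 0) else 0)
      = -1) ∨
    ((if A t then ALPHA A t else 0) +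
      ∑ w : Fin 4, (if P w then LOC A P w * (if t = SRC w then 1 else if t = TGT w then -1 else 0) else 0)
      = 0) ∨
    ((if A t then ALPHA A t else 0) +
      ∑ w : Fin 4, (if P w then LOC A P w * (if t = SRC w then 1 else if t = TGT w then -1 else 0) else 0)
      = 1) := by decide

lemma alpha_pm : ∀ (A : Fin 5 → Bool) (t : Fin 5), A t = true → ALPHA A t = 1 ∨ ALPHA A t = -1 := by decide

lemma loc_pm : ∀ (A : Fin 5 → Bool) (P : Fin 4 → Bool) (w : Fin 4), LOC A P w = 1 ∨ LOC A P w = -1 := by decide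

open Matrix in
/-- Camion's sufficiency argument: a matrix admitting "equitable colorings" of every
finite set of rows is totally unimodular. -/
lemma tu_of_coloring {X Y : Type*} [DecidableEq X] (A : Matrix X Y ℤ)
    (hcol : ∀ S : Finset X, ∃ l : X → ℤ, (∀ r ∈ S, l r = 1 ∨ l r = -1) ∧
      ∀ c : Y, (∑ r ∈ S, l r * A r c = -1 ∨ ∑ r ∈ S, l r * A r c = 0 ∨
        ∑ r ∈ S, l r * A r c = 1)) :
    A.IsTotallyUnimodular := by
  intro k
  induction k using Nat.strong_induction_on with
  | _ k ih =>
    intro f g hf hg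
    match k with
    | 0 => exact ⟨1, by simp⟩
    | Nat.succ m =>
      set B : Matrix (Fin (m+1)) (Fin (m+1)) ℤ := A.submatrix f g with hB
      by_cases hd : B.det = 0
      · exact ⟨0, by simp [hd]⟩
      -- the cofactor row vector
      set z : Fin (m+1) → ℤ := fun i => B.adjugate 0 i with hz
      -- each cofactor is a minor, hence in {-1,0,1} by induction
      have hz1 : ∀ i, z i = -1 ∨ z i = 0 ∨ z i = 1 := by
        intro i
        have hadj : z i = (B.updateRow i (Pi.single 0 1)).det := Matrix.adjugate_apply B 0 i
        rw [Matrix.det_succ_row _ i] at hadj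
        have hrow : ∀ j, (B.updateRow i (Pi.single 0 1)) i j = if j = 0 then 1 else 0 := by
          intro j; rw [Matrix.updateRow_self]; exact Pi.single_apply 0 1 j
        rw [Finset.sum_eq_single (0 : Fin (m+1))] at hadj
        rotate_left
        · intro b _ hb; rw [hrow b, if_neg hb]; ring
        · simp
        have hsub : (B.updateRow i (Pi.single 0 1)).submatrix i.succAbove (Fin.succAbove 0)
            = A.submatrix (f ∘ i.succAbove) (g ∘ Fin.succAbove 0) := by
          ext a b
          simp only [Matrix.submatrix_apply, Function.comp_apply]
          rw [Matrix.updateRow_ne (Fin.succAbove_ne i a)]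
          rfl
        rw [hrow 0, if_pos rfl, hsub] at hadj
        obtain ⟨s, hs⟩ := ih m (Nat.lt_succ_self m) (f ∘ i.succAbove) (g ∘ Fin.succAbove 0)
          (hf.comp (Fin.succAbove_right_injective)) (hg.comp (Fin.succAbove_right_injective))
        rw [← hs] at hadj
        have hpow : ((-1 : ℤ)) ^ ((i : ℕ) + ((0 : Fin (m+1)) : ℕ)) = 1 ∨
            ((-1 : ℤ)) ^ ((i : ℕ) + ((0 : Fin (m+1)) : ℕ)) = -1 := by
          rcases Nat.even_or_odd ((i : ℕ) + ((0 : Fin (m+1)) : ℕ)) with h | h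
          · exact Or.inl (Even.neg_one_pow h)
          · exact Or.inr (Odd.neg_one_pow h)
        have hcast : (s : ℤ) = -1 ∨ (s : ℤ) = 0 ∨ (s : ℤ) = 1 := by
          cases s
          · exact Or.inr (Or.inl SignType.coe_zero)
          · exact Or.inl SignType.coe_neg_one
          · exact Or.inr (Or.inr SignType.coe_one)
        rcases hpow with h | h <;> rw [h] at hadj <;> omega
      -- z ⬝ B = det • e₀
      have hw : ∀ j, ∑ i, z i * B i j = if j = 0 then B.det else 0 := by
        intro j
        have := congrFun (congrFun (Matrix.adjugate_mul B) 0) j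
        rw [Matrix.mul_apply] at this
        simpa [Matrix.one_apply, eq_comm, mul_comm] using this
      have hz0 : ∃ i, z i ≠ 0 := by
        by_contra h
        push_neg at h
        have := hw 0
        simp only [if_true, if_pos trivial] at this
        apply hd
        rw [← this]
        apply Finset.sum_eq_zero
        intro i _
        rw [h i, zero_mul]
      obtain ⟨i0, hi0⟩ := hz0
      classical
      set S : Finset X := (Finset.univ.filter fun i => z i ≠ 0).image f with hS
      obtain ⟨l, hl1, hl2⟩ := hcol S
      set l' : Fin (m+1) → ℤ := fun i => if z i = 0 then 0 else l (f i) with hl'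
      have hmem : ∀ i : Fin (m+1), z i ≠ 0 → f i ∈ S := by
        intro i hi; exact Finset.mem_image.mpr ⟨i, Finset.mem_filter.mpr ⟨Finset.mem_univ _, hi⟩, rfl⟩
      have hl'pm : ∀ i, z i ≠ 0 → (l' i = 1 ∨ l' i = -1) := by
        intro i hi
        simp only [hl', if_neg hi]
        exact hl1 _ (hmem i hi)
      -- u j
      have hu : ∀ j, ∑ i, l' i * B i j = ∑ r ∈ S, l r * A r (g j) := by
        intro j
        rw [hS, Finset.sum_image (fun a _ b _ h => hf h), Finset.sum_filter]
        apply Finset.sum_congr rfl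
        intro i _
        by_cases hzi : z i = 0 <;> simp [hl', hzi, hB]
      have hu1 : ∀ j, (∑ i, l' i * B i j = -1 ∨ ∑ i, l' i * B i j = 0 ∨ ∑ i, l' i * B i j = 1) := by
        intro j; rw [hu j]; exact hl2 (g j)
      -- parity
      have hpar : ∀ j, ((∑ i, l' i * B i j : ℤ) : ZMod 2) = ((∑ i, z i * B i j : ℤ) : ZMod 2) := by
        intro j
        push_cast
        apply Finset.sum_congr rfl
        intro i _
        have : ((l' i : ℤ) : ZMod 2) = ((z i : ℤ) : ZMod 2) := by
          by_cases hzi : z i = 0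
          · simp [hl', hzi]
          · rcases hz1 i with h2 | h2 | h2
            · rcases hl'pm i hzi with h | h <;> rw [h, h2] <;> decide
            · exact absurd h2 hzi
            · rcases hl'pm i hzi with h | h <;> rw [h, h2] <;> decide
        rw [this]
      have huj0 : ∀ j, j ≠ 0 → ∑ i, l' i * B i j = 0 := by
        intro j hj
        have h1 := hpar j
        rw [hw j, if_neg (by simpa [eq_comm] using hj)] at h1
        rcases hu1 j with h | h | h
        · rw [h] at h1; exact absurd h1 (by decide)
        · exact h
        · rw [h] at h1; exact absurd h1 (by decide)
      -- u 0 ≠ 0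
      have hvm : ∀ v : Fin (m+1) → ℤ, (∀ j, ∑ i, v i * B i j = 0) → v = 0 := by
        intro v hv
        have h1 : v ᵥ* B = 0 := by
          funext j
          exact hv j
        have h2 : v ᵥ* (B * B.adjugate) = 0 := by
          rw [← Matrix.vecMul_vecMul, h1, Matrix.zero_vecMul]
        rw [Matrix.mul_adjugate] at h2
        have h3 : ∀ i, (v ᵥ* ((B.det : ℤ) • (1 : Matrix (Fin (m+1)) (Fin (m+1)) ℤ))) i
            = B.det * v i := by
          intro i
          simp [Matrix.vecMul, dotProduct, Matrix.smul_apply, Matrix.one_apply,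
            mul_ite, mul_comm, Finset.sum_ite_eq]
        rw [show v ᵥ* ((B.det : ℤ) • (1 : Matrix (Fin (m+1)) (Fin (m+1)) ℤ))
            = fun i => B.det * v i from funext h3] at h2
        funext i
        have := congrFun h2 i
        simp only [Pi.smul_apply, smul_eq_mul, Pi.zero_apply] at this ⊢
        rcases mul_eq_zero.mp this with h | h
        · exact absurd h hd
        · exact h
      have hu0 : ∑ i, l' i * B i 0 = 1 ∨ ∑ i, l' i * B i 0 = -1 := by
        rcases hu1 0 with h | h | h
        · right; exact h
        · exfalso
          have : l' = 0 := hvm l' (fun j => by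
            by_cases hj : j = 0
            · rw [hj]; exact h
            · exact huj0 j hj)
          have h0 := congrFun this i0
          simp only [Pi.zero_apply] at h0
          rcases hl'pm i0 hi0 with hh | hh <;> rw [h0] at hh <;> omega
        · left; exact h
      -- y = u0 • z - det • l' is in the left kernel, hence zero
      set u0 : ℤ := ∑ i, l' i * B i 0 with hu0def
      have hy : (fun i => u0 * z i - B.det * l' i) = 0 := by
        apply hvm
        intro j
        have expand : ∑ i, (u0 * z i - B.det * l' i) * B i j
            = u0 * (∑ i, z i * B i j) - B.det * (∑ i, l' i * B i j) := by
          rw [Finset.mul_sum, Finset.mul_sum, ← Finset.sum_sub_distrib]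
          apply Finset.sum_congr rfl
          intro i _; ring
        rw [expand, hw j]
        by_cases hj : j = 0
        · rw [hj, if_pos rfl, ← hu0def]; ring
        · rw [if_neg (by simpa [eq_comm] using hj), huj0 j hj]; ring
      have hkey : u0 * z i0 = B.det * l' i0 := by
        have h0 := congrFun hy i0
        simp only [Pi.zero_apply] at h0
        exact sub_eq_zero.mp h0
      rcases hu0 with h1 | h1 <;> rcases hl'pm i0 hi0 with h2 | h2 <;>
        rcases hz1 i0 with h3 | h3 | h3 <;> rw [h1, h2, h3] at hkey <;>
        first
        | (exact absurd h3 hi0)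
        | (exact ⟨1, by rw [show B.det = 1 by omega]; simp⟩)
        | (exact ⟨-1, by rw [show B.det = -1 by omega]; simp⟩)


def NM (n : ℕ) : Matrix (Fin 5 ⊕ Fin 4 × Fin n) (Fin 5 × Fin n) ℤ :=
  fun r c => match r with
  | .inl a => if c.1 = a then 1 else 0
  | .inr (w, i) => if c.2 = i then (if c.1 = SRC w then 1 else if c.1 = TGT w then -1 else 0) else 0

lemma coloring (n : ℕ) (S : Finset (Fin 5 ⊕ Fin 4 × Fin n)) :
    ∃ l : (Fin 5 ⊕ Fin 4 × Fin n) → ℤ, (∀ r ∈ S, l r = 1 ∨ l r = -1) ∧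
      ∀ c, (∑ r ∈ S, l r * NM n r c = -1 ∨ ∑ r ∈ S, l r * NM n r c = 0 ∨
        ∑ r ∈ S, l r * NM n r c = 1) := by
  classical
  set A : Fin 5 → Bool := fun a => decide (Sum.inl a ∈ S) with hA
  set P : Fin n → Fin 4 → Bool := fun i w => decide (Sum.inr (w, i) ∈ S) with hP
  set l : (Fin 5 ⊕ Fin 4 × Fin n) → ℤ := fun r => match r with
    | .inl a => ALPHA A a
    | .inr (w, i) => LOC A (P i) w with hl
  refine ⟨l, ?_, ?_⟩
  · rintro (a | ⟨w, i⟩) hr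
    · exact alpha_pm A a (by simp [hA, hr])
    · exact loc_pm A (P i) w
  · rintro ⟨t, j⟩
    have hstep : ∑ r ∈ S, l r * NM n r (t, j)
        = ∑ r : Fin 5 ⊕ Fin 4 × Fin n, (if r ∈ S then l r * NM n r (t, j) else 0) := by
      rw [Finset.sum_ite_mem, Finset.univ_inter]
    rw [hstep, Fintype.sum_sum_type]
    have h1 : ∑ a : Fin 5, (if Sum.inl a ∈ S then l (Sum.inl a) * NM n (Sum.inl a) (t, j) else 0)
        = (if A t then ALPHA A t else 0) := by
      have hpt : ∀ a : Fin 5, (if Sum.inl a ∈ S then l (Sum.inl a) * NM n (Sum.inl a) (t, j) else 0)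
          = if a = t then (if A t then ALPHA A t else 0) else 0 := by
        intro a
        by_cases hat : a = t
        · subst hat
          by_cases hmem : Sum.inl a ∈ S <;>
            simp [hl, NM, hmem, hA]
        · by_cases hmem : Sum.inl a ∈ S <;>
            simp [hl, NM, hmem, hA, Ne.symm hat, hat]
      rw [Finset.sum_congr rfl fun a _ => hpt a, Finset.sum_ite_eq' Finset.univ t,
        if_pos (Finset.mem_univ t)]
    have h2 : ∑ p : Fin 4 × Fin n, (if Sum.inr p ∈ S then l (Sum.inr p) * NM n (Sum.inr p) (t, j) else 0)
        = ∑ w : Fin 4, (if P j w then LOC A (P j) w * (if t = SRC w then 1 else if t = TGT w then -1 else 0) else 0) := by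
      rw [Fintype.sum_prod_type]
      apply Finset.sum_congr rfl
      intro w _
      have hpt : ∀ i : Fin n, (if Sum.inr (w, i) ∈ S then l (Sum.inr (w, i)) * NM n (Sum.inr (w, i)) (t, j) else 0)
          = if i = j then (if P j w then LOC A (P j) w * (if t = SRC w then 1 else if t = TGT w then -1 else 0) else 0) else 0 := by
        intro i
        by_cases hij : i = j
        · subst hij
          by_cases hmem : Sum.inr (w, i) ∈ S <;>
            simp [hl, NM, hmem, hP]
        · by_cases hmem : Sum.inr (w, i) ∈ S <;>
            simp [hl, NM, hmem, hP, Ne.symm hij, hij]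
      rw [Finset.sum_congr rfl fun i _ => hpt i, Finset.sum_ite_eq' Finset.univ j,
        if_pos (Finset.mem_univ j)]
    rw [h1, h2]
    exact core_mem A (P j) t

lemma NM_tu (n : ℕ) : (NM n).IsTotallyUnimodular :=
  tu_of_coloring (NM n) (coloring n)

/-- The coefficient matrix of problem (14) (Table 2).  Columns are five blocks
of size `n`: the `x`-block (`0 ≤ c < n`), the `z`-block (`n ≤ c < 2n`), the
`z̄`-block (`2n ≤ c < 3n`), the `z'`-block (`3n ≤ c < 4n`) and the `z̄'`-block
(`4n ≤ c < 5n`).  Rows are `a₁,…,a₅` followed by the blocks `b_i`, `c_i`,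
`d_i`, `e_i` for `i ∈ [n]`. -/
def M9 (n : ℕ) : Matrix (Fin (4 * n + 5)) (Fin (5 * n)) ℝ := fun r c =>
  if r.val = 0 then (if c.val < n then 1 else 0)
  else if r.val = 1 then (if n ≤ c.val ∧ c.val < 2 * n then 1 else 0)
  else if r.val = 2 then (if 2 * n ≤ c.val ∧ c.val < 3 * n then 1 else 0)
  else if r.val = 3 then (if 3 * n ≤ c.val ∧ c.val < 4 * n then 1 else 0)
  else if r.val = 4 then (if 4 * n ≤ c.val then 1 else 0)
  else if r.val < 5 + n then
    -- row `b_i` with `i = r.val - 5`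
    (if c.val = r.val - 5 then 1
     else if c.val = 3 * n + (r.val - 5) then -1 else 0)
  else if r.val < 5 + 2 * n then
    -- row `c_i` with `i = r.val - 5 - n`
    (if c.val = n + (r.val - 5 - n) then 1
     else if c.val = 3 * n + (r.val - 5 - n) then -1 else 0)
  else if r.val < 5 + 3 * n then
    -- row `d_i` with `i = r.val - 5 - 2n`
    (if c.val = r.val - 5 - 2 * n then 1
     else if c.val = 4 * n + (r.val - 5 - 2 * n) then -1 else 0)
  else
    -- row `e_i` with `i = r.val - 5 - 3n`
    (if c.val = 2 * n + (r.val - 5 - 3 * n) then 1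
     else if c.val = 4 * n + (r.val - 5 - 3 * n) then -1 else 0)


def rho (n : ℕ) (hn : 0 < n) : Fin (4 * n + 5) → Fin 5 ⊕ Fin 4 × Fin n := fun r =>
  if h : r.val < 5 then .inl ⟨r.val, h⟩
  else .inr (⟨(r.val - 5) / n, by
      have := r.isLt
      apply Nat.div_lt_of_lt_mul
      omega⟩,
    ⟨(r.val - 5) % n, Nat.mod_lt _ hn⟩)

def sigma' (n : ℕ) (hn : 0 < n) : Fin (5 * n) → Fin 5 × Fin n := fun c =>
  (⟨c.val / n, by
      have := c.isLt
      apply Nat.div_lt_of_lt_mul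
      omega⟩,
    ⟨c.val % n, Nat.mod_lt _ hn⟩)

lemma M9_eq (n : ℕ) (hn : 0 < n) :
    M9 n = ((NM n).map (Int.cast : ℤ → ℝ)).submatrix (rho n hn) (sigma' n hn) := by
  ext r c
  obtain ⟨q, s, hq5, hsn, hc⟩ : ∃ q s, q < 5 ∧ s < n ∧ (c : ℕ) = n * q + s :=
    ⟨(c : ℕ) / n, (c : ℕ) % n, Nat.div_lt_of_lt_mul (by have := c.isLt; omega),
      Nat.mod_lt _ hn, by have := Nat.div_add_mod (c : ℕ) n; omega⟩
  have e1 : (c : ℕ) / n = q := by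
    rw [hc, Nat.mul_add_div hn, Nat.div_eq_of_lt hsn, add_zero]
  have e2 : (c : ℕ) % n = s := by
    rw [hc, Nat.mul_add_mod, Nat.mod_eq_of_lt hsn]
  have hq : q = 0 ∨ q = 1 ∨ q = 2 ∨ q = 3 ∨ q = 4 := by omega
  by_cases h5 : (r : ℕ) < 5
  · simp only [Matrix.submatrix_apply, Matrix.map_apply, rho, sigma', dif_pos h5, e1, e2]
    have hr : (r : ℕ) = 0 ∨ (r : ℕ) = 1 ∨ (r : ℕ) = 2 ∨ (r : ℕ) = 3 ∨ (r : ℕ) = 4 := by omega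
    rcases hr with h|h|h|h|h <;> rcases hq with h2|h2|h2|h2|h2 <;> subst h2 <;>
      simp (config := { decide := true }) [M9, NM, SRC, TGT, h, Fin.mk.injEq] <;>
      (try split_ifs) <;> first | omega | (norm_num; done) | (exfalso; omega)
  · obtain ⟨w, i, hw4, hin, hr5⟩ : ∃ w i, w < 4 ∧ i < n ∧ (r : ℕ) = 5 + n * w + i := by
      refine ⟨((r : ℕ) - 5) / n, ((r : ℕ) - 5) % n,
        Nat.div_lt_of_lt_mul (by have := r.isLt; omega), Nat.mod_lt _ hn, ?_⟩
      have := Nat.div_add_mod ((r : ℕ) - 5) n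
      omega
    have e3 : ((r : ℕ) - 5) / n = w := by
      rw [show (r : ℕ) - 5 = n * w + i by omega, Nat.mul_add_div hn,
        Nat.div_eq_of_lt hin, add_zero]
    have e4 : ((r : ℕ) - 5) % n = i := by
      rw [show (r : ℕ) - 5 = n * w + i by omega, Nat.mul_add_mod, Nat.mod_eq_of_lt hin]
    simp only [Matrix.submatrix_apply, Matrix.map_apply, rho, sigma', dif_neg h5, e1, e2, e3, e4]
    have hww : w = 0 ∨ w = 1 ∨ w = 2 ∨ w = 3 := by omega
    have hy0 : ¬ (r : ℕ) = 0 := by omega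
    have hy1 : ¬ (r : ℕ) = 1 := by omega
    have hy2 : ¬ (r : ℕ) = 2 := by omega
    have hy3 : ¬ (r : ℕ) = 3 := by omega
    have hy4 : ¬ (r : ℕ) = 4 := by omega
    rcases hww with h|h|h|h <;> subst h
    · have hx0 : (r : ℕ) < 5 + n := by omega
      rcases hq with h2|h2|h2|h2|h2 <;> subst h2 <;>
        simp (config := { decide := true }) [M9, NM, SRC, TGT, hx0, hy0, hy1, hy2, hy3, hy4, Fin.mk.injEq] <;>
        (try split_ifs) <;> first | omega | (norm_num; done) | (exfalso; omega)
    · have hx0 : ¬ (r : ℕ) < 5 + n := by omega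
      have hx1 : (r : ℕ) < 5 + 2 * n := by omega
      rcases hq with h2|h2|h2|h2|h2 <;> subst h2 <;>
        simp (config := { decide := true }) [M9, NM, SRC, TGT, hx0, hx1, hy0, hy1, hy2, hy3, hy4, Fin.mk.injEq] <;>
        (try split_ifs) <;> first | omega | (norm_num; done) | (exfalso; omega)
    · have hx0 : ¬ (r : ℕ) < 5 + n := by omega
      have hx1 : ¬ (r : ℕ) < 5 + 2 * n := by omega
      have hx2 : (r : ℕ) < 5 + 3 * n := by omega
      rcases hq with h2|h2|h2|h2|h2 <;> subst h2 <;>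
        simp (config := { decide := true }) [M9, NM, SRC, TGT, hx0, hx1, hx2, hy0, hy1, hy2, hy3, hy4, Fin.mk.injEq] <;>
        (try split_ifs) <;> first | omega | (norm_num; done) | (exfalso; omega)
    · have hx0 : ¬ (r : ℕ) < 5 + n := by omega
      have hx1 : ¬ (r : ℕ) < 5 + 2 * n := by omega
      have hx2 : ¬ (r : ℕ) < 5 + 3 * n := by omega
      rcases hq with h2|h2|h2|h2|h2 <;> subst h2 <;>
        simp (config := { decide := true }) [M9, NM, SRC, TGT, hx0, hx1, hx2, hy0, hy1, hy2, hy3, hy4, Fin.mk.injEq] <;>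
        (try split_ifs) <;> first | omega | (norm_num; done) | (exfalso; omega)

/-- The coefficient matrix of problem (14) is totally unimodular. -/
theorem stmt9 (n : ℕ) (hn : 1 ≤ n) : (M9 n).IsTotallyUnimodular := by
  have h1 : ((NM n).map (Int.cast : ℤ → ℝ)).IsTotallyUnimodular := by
    intro k f g hf hg
    obtain ⟨s, hs⟩ := NM_tu n k f g hf hg
    refine ⟨s, ?_⟩
    have h2 : ((NM n).map (Int.cast : ℤ → ℝ)).submatrix f g
        = ((NM n).submatrix f g).map (Int.cast : ℤ → ℝ) := rfl
    have h3 := RingHom.map_det (Int.castRingHom ℝ) ((NM n).submatrix f g)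
    have h4 : ((NM n).submatrix f g).map (Int.cast : ℤ → ℝ)
        = (Int.castRingHom ℝ).mapMatrix ((NM n).submatrix f g) := rfl
    rw [h2, h4, ← h3, ← hs]
    cases s <;> simp
  rw [M9_eq n hn]
  exact h1.submatrix _ _
end
end
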